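/- arXiv:2304.13165 — 5 statements merged into one kernel-verified Lean document; each statement's English description precedes it below -/
import Mathlib

section
/- Let (Σ, 𝔅, μ) be a σ-finite measure space and let E : L²(Σ, μ) → (−∞, +∞] be a proper, lower semicontinuous, convex functional satisfying (H2*): E(u + T∘(û − u)) + E(û − T∘(û − u)) ≤ E(u) + E(û) for all u, û ∈ L² and all T ∈ P₀. Then the part A = ∂E ∩ (L^{1∩∞} × L^{1∩∞}) of the subgradient ∂E is completely accretive, i.e. for all (u, v), (û, v̂) ∈ A, all λ > 0 and all j ∈ J₀ one has ∫_Σ j(u − û) dμ ≤ ∫_Σ j(u − û + λ(v − v̂)) dμ. -/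
open MeasureTheory Filter Topology
open scoped ENNReal

noncomputable section

/-- The restricted signum function `sign₀ : ℝ → {−1, 0, 1}`. -/
def sign0 (s : ℝ) : ℝ := if 0 < s then 1 else if s < 0 then -1 else 0

/-- Membership in the class `J₀` of convex, lower semicontinuous functions
`j : ℝ → [0, +∞]` with `j 0 = 0`. -/
def MemJ0 (j : ℝ → ℝ≥0∞) : Prop :=
  LowerSemicontinuous j ∧ j 0 = 0 ∧
    ∀ a b t : ℝ, 0 ≤ t → t ≤ 1 →
      j (t * a + (1 - t) * b) ≤ ENNReal.ofReal t * j a + ENNReal.ofReal (1 - t) * j b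

/-- The Yosida operator `[φ⁻¹]_λ = λ⁻¹ (I − (I + λ φ⁻¹)⁻¹)` of the inverse
function `φ⁻¹` of `φ : ℝ → ℝ`, as a real function applied pointwise. -/
def yosida (φ : ℝ → ℝ) (lam : ℝ) (r : ℝ) : ℝ :=
  (r - Function.invFun (fun s : ℝ => s + lam * Function.invFun φ s) r) / lam

variable {Ω : Type*} [MeasurableSpace Ω]

/-- The subgradient `∂E ⊆ L² × L²` of `E : L² → (−∞, +∞]` as a graph:
`(u, h) ∈ ∂E` iff `E u < ∞` and `⟨h, v − u⟩_{L²} + E u ≤ E v` for all `v ∈ L²`. -/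
def SubGrad (μ : Measure Ω) (E : Lp ℝ 2 μ → WithTop ℝ) :
    Set (Lp ℝ 2 μ × Lp ℝ 2 μ) :=
  {p | E p.1 < ⊤ ∧ ∀ v : Lp ℝ 2 μ,
    ((∫ x, p.2 x * (v x - p.1 x) ∂μ : ℝ) : WithTop ℝ) + E p.1 ≤ E v}

/-- The part `A = (∂E)|_{L^{1∩∞}} = ∂E ∩ (L^{1∩∞} × L^{1∩∞})` of the
subgradient `∂E` in `L¹ ∩ L^∞`. -/
def PartA (μ : Measure Ω) (E : Lp ℝ 2 μ → WithTop ℝ) :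
    Set (Lp ℝ 2 μ × Lp ℝ 2 μ) :=
  {p ∈ SubGrad μ E | MemLp (p.1 : Ω → ℝ) 1 μ ∧ MemLp (p.1 : Ω → ℝ) ⊤ μ ∧
    MemLp (p.2 : Ω → ℝ) 1 μ ∧ MemLp (p.2 : Ω → ℝ) ⊤ μ}

/-- The doubly nonlinear graph `Aφ ⊆ L¹ × L¹`:
`(u, v) ∈ Aφ` iff `φ∘u ∈ D(A)` and `v ∈ A(φ∘u)` where `A = (∂E)|_{L^{1∩∞}}`. -/
def APhi (μ : Measure Ω) (E : Lp ℝ 2 μ → WithTop ℝ) (φ : ℝ → ℝ) :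
    Set (Lp ℝ 1 μ × Lp ℝ 1 μ) :=
  {p | ∃ U V : Lp ℝ 2 μ,
    (U : Ω → ℝ) =ᵐ[μ] (fun x => φ (p.1 x)) ∧
    (V : Ω → ℝ) =ᵐ[μ] (p.2 : Ω → ℝ) ∧ (U, V) ∈ PartA μ E}

/-- The effective domain `D(Eφ) = {u ∈ L^{1∩∞} : φ∘u ∈ D(E)}`, as a subset
of `L¹`. -/
def DEPhi (μ : Measure Ω) (E : Lp ℝ 2 μ → WithTop ℝ) (φ : ℝ → ℝ) :
    Set (Lp ℝ 1 μ) :=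
  {u | MemLp (u : Ω → ℝ) ⊤ μ ∧
    ∃ U : Lp ℝ 2 μ, (U : Ω → ℝ) =ᵐ[μ] (fun x => φ (u x)) ∧ E U < ⊤}


/-- Membership in the class `P₀` of continuously differentiable functions
`T : ℝ → ℝ` with `T 0 = 0`, `0 ≤ T′ ≤ 1`, and `T′` of compact support. -/
def MemP0 (T : ℝ → ℝ) : Prop :=
  ContDiff ℝ 1 T ∧ T 0 = 0 ∧ (∀ r : ℝ, 0 ≤ deriv T r ∧ deriv T r ≤ 1) ∧
    HasCompactSupport (deriv T)

/-- Left slope of `G` at `a` with step `h`. -/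
def lslope (G : ℝ → ℝ) (a h : ℝ) : ℝ := (G a - G (a - h)) / h

/-- Selection of a subgradient: supremum of left slopes. -/
def qsel (G : ℝ → ℝ) (a : ℝ) : ℝ := sSup (lslope G a '' Set.Ioi 0)

/-- A convenient bundle of hypotheses. -/
structure NiceCvx (G : ℝ → ℝ) (K : ℝ) : Prop where
  conv : ConvexOn ℝ Set.univ G
  mono : Monotone G
  zero : ∀ r ≤ (0:ℝ), G r = 0
  lip : ∀ a b, |G a - G b| ≤ K * |a - b|
  Knn : 0 ≤ K

namespace NiceCvx

variable {G : ℝ → ℝ} {K : ℝ} (hG : NiceCvx G K)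
include hG

theorem lslope_le_slope {a b h : ℝ} (hh : 0 < h) (hab : a < b) :
    lslope G a h ≤ (G b - G a) / (b - a) := by
  have := hG.conv.secant_mono (Set.mem_univ a) (Set.mem_univ (a - h)) (Set.mem_univ b)
    (by linarith) (by linarith) (by linarith)
  have e : (G (a - h) - G a) / (a - h - a) = lslope G a h := by
    rw [lslope]
    rw [show a - h - a = -h by ring, div_neg, ← neg_div, neg_sub]
  rwa [e] at this

theorem lslope_nonneg {a h : ℝ} (hh : 0 < h) : 0 ≤ lslope G a h :=
  div_nonneg (by have := hG.mono (show a - h ≤ a by linarith); linarith) hh.le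

theorem lslope_le_K {a h : ℝ} (hh : 0 < h) : lslope G a h ≤ K := by
  rw [lslope, div_le_iff₀ hh]
  calc G a - G (a - h) ≤ |G a - G (a - h)| := le_abs_self _
    _ ≤ K * |a - (a - h)| := hG.lip _ _
    _ = K * h := by rw [show a - (a - h) = h by ring, abs_of_pos hh]

theorem lslope_anti {a h h' : ℝ} (hh : 0 < h) (hhh : h ≤ h') : lslope G a h' ≤ lslope G a h := by
  rcases eq_or_lt_of_le hhh with rfl | hlt
  · exact le_rfl
  have := hG.conv.secant_mono (Set.mem_univ a) (Set.mem_univ (a - h')) (Set.mem_univ (a - h))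
    (by linarith) (by linarith) (by linarith)
  have e1 : (G (a - h') - G a) / (a - h' - a) = lslope G a h' := by
    rw [lslope, show a - h' - a = -h' by ring, div_neg, ← neg_div, neg_sub]
  have e2 : (G (a - h) - G a) / (a - h - a) = lslope G a h := by
    rw [lslope, show a - h - a = -h by ring, div_neg, ← neg_div, neg_sub]
  rwa [e1, e2] at this

theorem bddAbove_lslope (a : ℝ) : BddAbove (lslope G a '' Set.Ioi 0) := by
  refine ⟨K, ?_⟩
  rintro s ⟨h, hh, rfl⟩
  exact hG.lslope_le_K hh

theorem qsel_mem_le {a : ℝ} {c : ℝ} (hc : ∀ h > (0:ℝ), lslope G a h ≤ c) : qsel G a ≤ c := by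
  refine csSup_le ⟨lslope G a 1, ⟨1, Set.mem_Ioi.2 one_pos, rfl⟩⟩ ?_
  rintro s ⟨h, hh, rfl⟩; exact hc h hh

theorem le_qsel {a h : ℝ} (hh : 0 < h) : lslope G a h ≤ qsel G a :=
  le_csSup (hG.bddAbove_lslope a) ⟨h, hh, rfl⟩

theorem qsel_nonneg (a : ℝ) : 0 ≤ qsel G a :=
  le_trans (hG.lslope_nonneg one_pos) (hG.le_qsel one_pos)

theorem qsel_le_K (a : ℝ) : qsel G a ≤ K :=
  hG.qsel_mem_le fun h hh => hG.lslope_le_K hh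

theorem qsel_subgrad (a b : ℝ) : G a + qsel G a * (b - a) ≤ G b := by
  rcases lt_trichotomy a b with hab | rfl | hba
  · have h1 : qsel G a ≤ (G b - G a) / (b - a) :=
      hG.qsel_mem_le fun h hh => hG.lslope_le_slope hh hab
    have hba : 0 < b - a := by linarith
    have := (le_div_iff₀ hba).1 h1
    linarith
  · simp
  · have h1 : lslope G a (a - b) ≤ qsel G a := hG.le_qsel (by linarith)
    rw [lslope, show a - (a - b) = b by ring] at h1
    have hab : 0 < a - b := by linarith
    have := (div_le_iff₀ hab).1 h1
    nlinarith

theorem qsel_zero {a : ℝ} (ha : a ≤ 0) : qsel G a = 0 := by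
  apply le_antisymm
  · apply hG.qsel_mem_le
    intro h hh
    rw [lslope, hG.zero a ha, hG.zero (a - h) (by linarith), sub_zero, zero_div]
  · exact hG.qsel_nonneg a


theorem qsel_mono : Monotone (qsel G) := by
  intro a b hab
  rcases eq_or_lt_of_le hab with rfl | hlt
  · exact le_rfl
  apply hG.qsel_mem_le
  intro h hh
  have h1 : lslope G a h ≤ (G b - G a) / (b - a) := hG.lslope_le_slope hh hlt
  have h2 : (G b - G a) / (b - a) = lslope G b (b - a) := by
    rw [lslope, show b - (b - a) = a by ring]
  exact h2 ▸ h1 |>.trans (hG.le_qsel (by linarith))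

/-- Monotonicity of forward differences of a convex function. -/
theorem fdiff_mono {x y h : ℝ} (hh : 0 < h) (hxy : x ≤ y) :
    G x - G (x - h) ≤ G y - G (y - h) := by
  rcases eq_or_lt_of_le hxy with rfl | hlt
  · exact le_rfl
  set lam : ℝ := (y - x) / (y - x + h) with hlam
  have hd : (0:ℝ) < y - x + h := by linarith
  have hl0 : 0 ≤ lam := div_nonneg (by linarith) hd.le
  have hl1 : lam ≤ 1 := by rw [hlam, div_le_one hd]; linarith
  have e1 : lam * (x - h) + (1 - lam) * y = x := by
    rw [hlam]; field_simp; ring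
  have e2 : (1 - lam) * (x - h) + lam * y = y - h := by
    rw [hlam]; field_simp; ring
  have hb0 : (0:ℝ) ≤ 1 - lam := by linarith
  have hs1 : lam + (1 - lam) = 1 := by ring
  have hs2 : (1 - lam) + lam = 1 := by ring
  have c1 := hG.conv.2 (Set.mem_univ (x - h)) (Set.mem_univ y) hl0 hb0 hs1
  have c2 := hG.conv.2 (Set.mem_univ (x - h)) (Set.mem_univ y) hb0 hl0 hs2
  simp only [smul_eq_mul] at c1 c2
  rw [e1] at c1
  rw [e2] at c2
  linarith

theorem continuous : Continuous G := by
  rcases eq_or_lt_of_le hG.Knn with hK0 | hKpos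
  · have : ∀ a, G a = G 0 := by
      intro a
      have := hG.lip a 0
      rw [← hK0, zero_mul] at this
      have : |G a - G 0| = 0 := le_antisymm this (abs_nonneg _)
      have := abs_eq_zero.1 this
      linarith
    have e : G = fun _ => G 0 := funext this
    rw [e]; exact continuous_const
  · have : LipschitzWith ⟨K, hG.Knn⟩ G := by
      apply LipschitzWith.of_dist_le_mul
      intro a b
      rw [Real.dist_eq, Real.dist_eq]; exact hG.lip a b
    exact this.continuous

end NiceCvx

/-- Antiderivative. -/
def Phi (G : ℝ → ℝ) (a : ℝ) : ℝ := ∫ t in (0:ℝ)..a, G t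

/-- Twice-averaged (triangle-mollified) approximation of the left derivative. -/
def Tmol (G : ℝ → ℝ) (h a : ℝ) : ℝ := (Phi G a - 2 * Phi G (a - h) + Phi G (a - 2*h)) / h^2

/-- Its derivative: a second difference of `G`. -/
def Dmol (G : ℝ → ℝ) (h a : ℝ) : ℝ := (G a - 2 * G (a - h) + G (a - 2*h)) / h^2

namespace NiceCvx

variable {G : ℝ → ℝ} {K : ℝ} (hG : NiceCvx G K)
include hG

theorem hasDerivAt_Phi (a : ℝ) : HasDerivAt (Phi G) (G a) a := by
  exact intervalIntegral.integral_hasDerivAt_right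
    (hG.continuous.intervalIntegrable _ _)
    (hG.continuous.stronglyMeasurableAtFilter _ _)
    hG.continuous.continuousAt

theorem hasDerivAt_Tmol {h : ℝ} (a : ℝ) : HasDerivAt (Tmol G h) (Dmol G h a) a := by
  have h1 := hG.hasDerivAt_Phi a
  have h2 : HasDerivAt (fun a => Phi G (a - h)) (G (a - h)) a := by
    simpa [Function.comp_def] using (hG.hasDerivAt_Phi (a - h)).comp a ((hasDerivAt_id a).sub_const h)
  have h3 : HasDerivAt (fun a => Phi G (a - 2*h)) (G (a - 2*h)) a := by
    simpa [Function.comp_def] using (hG.hasDerivAt_Phi (a - 2*h)).comp a ((hasDerivAt_id a).sub_const (2*h))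
  have e : Tmol G h = fun x =>
      (Phi G x / h^2 - 2 * (Phi G (x - h) / h^2)) + Phi G (x - 2*h) / h^2 := by
    funext x; rw [Tmol]; ring
  have e2 : Dmol G h a = (G a / h^2 - 2 * (G (a - h) / h^2)) + G (a - 2*h) / h^2 := by
    rw [Dmol]; ring
  rw [e, e2]
  exact ((h1.div_const _).sub ((h2.div_const _).const_mul 2)).add (h3.div_const _)

theorem Dmol_nonneg {h a : ℝ} (hh : 0 < h) : 0 ≤ Dmol G h a := by
  have := hG.fdiff_mono hh (show a - h ≤ a by linarith)
  rw [show a - h - h = a - 2*h by ring] at this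
  have hsq : (0:ℝ) < h^2 := by positivity
  apply div_nonneg _ hsq.le
  linarith

theorem Dmol_le {h a : ℝ} (hh : 0 < h) : Dmol G h a ≤ 4 * K / h := by
  have l1 : G a - G (a - h) ≤ K * h := by
    have := (hG.lip a (a - h)).trans_eq (by rw [show a - (a-h) = h by ring, abs_of_pos hh])
    exact (le_abs_self _).trans this
  have l2 : G (a - 2*h) - G (a - h) ≤ K * h := by
    have := (hG.lip (a - 2*h) (a - h)).trans_eq
      (by rw [show a - 2*h - (a - h) = -h by ring, abs_neg, abs_of_pos hh])
    exact (le_abs_self _).trans this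
  have hsq : (0:ℝ) < h^2 := by positivity
  have hKnn := hG.Knn
  rw [Dmol, div_le_div_iff₀ hsq hh]
  nlinarith

theorem Dmol_of_nonpos {h a : ℝ} (hh : 0 < h) (ha : a ≤ 0) : Dmol G h a = 0 := by
  rw [Dmol, hG.zero a ha, hG.zero (a - h) (by linarith), hG.zero (a - 2*h) (by linarith)]
  ring

theorem continuous_Dmol {h : ℝ} : Continuous (Dmol G h) := by
  have hc := hG.continuous
  unfold Dmol
  exact ((hc.sub (continuous_const.mul (hc.comp (continuous_id.sub continuous_const)))).add
    (hc.comp (continuous_id.sub continuous_const))).div_const _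

theorem Tmol_eq {h a : ℝ} (hh : 0 < h) :
    Tmol G h a = (∫ t in (a-h)..a, (G t - G (t - h))) / h^2 := by
  have hInt : ∀ c d : ℝ, IntervalIntegrable G MeasureTheory.volume c d := fun c d =>
    hG.continuous.intervalIntegrable c d
  have e1 : Phi G a - Phi G (a - h) = ∫ t in (a-h)..a, G t := by
    have := intervalIntegral.integral_add_adjacent_intervals (hInt 0 (a-h)) (hInt (a-h) a)
    rw [Phi, Phi]; linarith [this]
  have e2 : Phi G (a - h) - Phi G (a - 2*h) = ∫ t in (a-h)..a, G (t - h) := by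
    have hs := intervalIntegral.integral_comp_sub_right (a := a - h) (b := a) (f := G) h
    have := intervalIntegral.integral_add_adjacent_intervals (hInt 0 (a-2*h)) (hInt (a-2*h) (a-h))
    rw [Phi, Phi, hs, show a - h - h = a - 2*h by ring]
    linarith [this]
  have e3 : (∫ t in (a-h)..a, (G t - G (t - h)))
      = (∫ t in (a-h)..a, G t) - ∫ t in (a-h)..a, G (t - h) := by
    apply intervalIntegral.integral_sub (hInt _ _)
    exact (hG.continuous.comp (continuous_id.sub continuous_const)).intervalIntegrable _ _
  rw [Tmol, e3, ← e1, ← e2]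
  ring_nf

theorem Tmol_le {h a : ℝ} (hh : 0 < h) : Tmol G h a ≤ lslope G a h := by
  rw [hG.Tmol_eq hh, lslope]
  have hb : (∫ t in (a-h)..a, (G t - G (t - h)))
      ≤ ∫ _t in (a-h)..a, (G a - G (a - h)) := by
    apply intervalIntegral.integral_mono_on (by linarith)
    · exact (hG.continuous.sub (hG.continuous.comp
        (continuous_id.sub continuous_const))).intervalIntegrable _ _
    · exact intervalIntegrable_const
    · intro t ht
      exact hG.fdiff_mono hh ht.2
  rw [intervalIntegral.integral_const, smul_eq_mul] at hb
  rw [div_le_div_iff₀ (by positivity) hh]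
  nlinarith

theorem le_Tmol {h a : ℝ} (hh : 0 < h) : lslope G (a - h) h ≤ Tmol G h a := by
  rw [hG.Tmol_eq hh, lslope]
  have hb : (∫ _t in (a-h)..a, (G (a-h) - G (a - h - h)))
      ≤ ∫ t in (a-h)..a, (G t - G (t - h)) := by
    apply intervalIntegral.integral_mono_on (by linarith)
    · exact intervalIntegrable_const
    · exact (hG.continuous.sub (hG.continuous.comp
        (continuous_id.sub continuous_const))).intervalIntegrable _ _
    · intro t ht
      exact hG.fdiff_mono hh ht.1
  rw [intervalIntegral.integral_const, smul_eq_mul] at hb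
  rw [div_le_div_iff₀ hh (by positivity)]
  nlinarith

theorem Tmol_zero {h : ℝ} (hh : 0 < h) : Tmol G h 0 = 0 := by
  have hPhi : ∀ b ≤ (0:ℝ), Phi G b = 0 := by
    intro b hb
    rw [Phi]
    have : Set.EqOn G (fun _ => (0:ℝ)) (Set.uIcc 0 b) := by
      intro t ht
      rcases Set.mem_uIcc.1 ht with h1 | h1
      · exact hG.zero t (by linarith [h1.2])
      · exact hG.zero t (by linarith [h1.2])
    rw [intervalIntegral.integral_congr this]
    simp
  rw [Tmol, hPhi 0 le_rfl, hPhi (0 - h) (by linarith), hPhi (0 - 2*h) (by linarith)]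
  ring

theorem tendsto_lslope {a : ℝ} {u : ℕ → ℝ} (hu0 : ∀ n, 0 < u n)
    (hu : Tendsto u atTop (𝓝 0)) :
    Tendsto (fun n => lslope G a (u n)) atTop (𝓝 (qsel G a)) := by
  rw [tendsto_order]
  constructor
  · intro c hc
    rw [qsel] at hc
    have hne : (lslope G a '' Set.Ioi 0).Nonempty :=
      ⟨lslope G a 1, ⟨1, Set.mem_Ioi.2 one_pos, rfl⟩⟩
    obtain ⟨s, hs, hcs⟩ := exists_lt_of_lt_csSup hne hc
    obtain ⟨h₀, hh₀, rfl⟩ := hs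
    have hev : ∀ᶠ n in atTop, u n < h₀ := hu.eventually_lt_const hh₀
    filter_upwards [hev] with n hn
    exact lt_of_lt_of_le hcs (hG.lslope_anti (hu0 n) hn.le)
  · intro c hc
    filter_upwards with n
    exact lt_of_le_of_lt (hG.le_qsel (hu0 n)) hc

theorem lslope_shift {h a : ℝ} (hh : 0 < h) :
    lslope G (a - h) h = 2 * lslope G a (2*h) - lslope G a h := by
  rw [lslope, lslope, lslope, show a - h - h = a - 2*h by ring]
  field_simp
  ring

theorem tendsto_Tmol {a : ℝ} {u : ℕ → ℝ} (hu0 : ∀ n, 0 < u n)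
    (hu : Tendsto u atTop (𝓝 0)) :
    Tendsto (fun n => Tmol G (u n) a) atTop (𝓝 (qsel G a)) := by
  have h2u : Tendsto (fun n => 2 * u n) atTop (𝓝 0) := by
    simpa using hu.const_mul 2
  have hup := hG.tendsto_lslope (a := a) hu0 hu
  have hlo : Tendsto (fun n => 2 * lslope G a (2 * u n) - lslope G a (u n)) atTop
      (𝓝 (qsel G a)) := by
    have := ((hG.tendsto_lslope (a := a) (fun n => by linarith [hu0 n]) h2u).const_mul 2).sub hup
    simpa [two_mul] using this
  apply tendsto_of_tendsto_of_tendsto_of_le_of_le hlo hup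
  · intro n
    have := hG.le_Tmol (a := a) (hu0 n)
    rwa [hG.lslope_shift (hu0 n)] at this
  · intro n
    exact hG.Tmol_le (hu0 n)

end NiceCvx

/-- Hypotheses bundle for the convex integrand `jr`. -/
structure NiceJ (jr : ℝ → ℝ) (K : ℝ) : Prop where
  conv : ConvexOn ℝ Set.univ jr
  zero : jr 0 = 0
  nonneg : ∀ r, 0 ≤ jr r
  lip : ∀ a b, |jr a - jr b| ≤ K * |a - b|
  Knn : 0 ≤ K

/-- Positive part `a ↦ jr (max a 0)`. -/
def GP (jr : ℝ → ℝ) : ℝ → ℝ := fun a => jr (max a 0)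

/-- Negative part `a ↦ jr (−max a 0)`. -/
def GM (jr : ℝ → ℝ) : ℝ → ℝ := fun a => jr (-(max a 0))

namespace NiceJ

variable {jr : ℝ → ℝ} {K : ℝ} (hj : NiceJ jr K)
include hj

theorem mono_nonneg {x y : ℝ} (hx : 0 ≤ x) (hxy : x ≤ y) : jr x ≤ jr y := by
  rcases eq_or_lt_of_le (hx.trans hxy) with rfl | hy
  · have : x = 0 := le_antisymm hxy hx
    simp [this]
  set th := x / y with hth
  have h0 : 0 ≤ th := div_nonneg hx hy.le
  have h1 : th ≤ 1 := by rw [hth, div_le_one hy]; exact hxy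
  have e : (1 - th) * 0 + th * y = x := by
    rw [hth]; field_simp; ring
  have c := hj.conv.2 (Set.mem_univ (0:ℝ)) (Set.mem_univ y) (by linarith : (0:ℝ) ≤ 1 - th) h0
    (by ring)
  simp only [smul_eq_mul] at c
  rw [e] at c
  rw [hj.zero] at c
  nlinarith [hj.nonneg y]

theorem neg : NiceJ (fun r => jr (-r)) K := by
  refine ⟨⟨convex_univ, ?_⟩, by simpa using hj.zero, fun r => hj.nonneg _, ?_, hj.Knn⟩
  · intro x _ y _ a b ha hb hab
    have c := hj.conv.2 (Set.mem_univ (-x)) (Set.mem_univ (-y)) ha hb hab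
    simp only [smul_eq_mul] at c ⊢
    rw [show a * -x + b * -y = -(a*x+b*y) by ring] at c
    exact c
  · intro a b
    have h := hj.lip (-a) (-b)
    have e : |-a - -b| = |a - b| := by rw [show -a - -b = -(a-b) by ring, abs_neg]
    rwa [e] at h

theorem nice_GP : NiceCvx (GP jr) K := by
  constructor
  · refine ⟨convex_univ, ?_⟩
    intro x _ y _ a b ha hb hab
    simp only [GP, smul_eq_mul]
    set x' := max x 0
    set y' := max y 0
    have hx' : x ≤ x' := le_max_left _ _
    have hy' : y ≤ y' := le_max_left _ _
    have hx0 : 0 ≤ x' := le_max_right _ _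
    have hy0 : 0 ≤ y' := le_max_right _ _
    have hm : max (a*x + b*y) 0 ≤ a * x' + b * y' := by
      apply max_le
      · have := mul_le_mul_of_nonneg_left hx' ha
        have := mul_le_mul_of_nonneg_left hy' hb
        linarith
      · positivity
    have h1 : jr (max (a*x + b*y) 0) ≤ jr (a * x' + b * y') :=
      hj.mono_nonneg (le_max_right _ _) hm
    have c := hj.conv.2 (Set.mem_univ x') (Set.mem_univ y') ha hb hab
    simp only [smul_eq_mul] at c
    exact h1.trans c
  · intro a b hab
    exact hj.mono_nonneg (le_max_right _ _) (max_le_max hab le_rfl)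
  · intro r hr
    rw [GP, max_eq_right hr, hj.zero]
  · intro a b
    refine (hj.lip _ _).trans ?_
    exact mul_le_mul_of_nonneg_left (abs_max_sub_max_le_abs a b 0) hj.Knn
  · exact hj.Knn

theorem nice_GM : NiceCvx (GM jr) K := by
  have := hj.neg.nice_GP
  exact this

theorem decomp (a : ℝ) : jr a = GP jr a + GM jr (-a) := by
  rcases le_total a 0 with ha | ha
  · rw [GP, GM, max_eq_right ha, max_eq_left (by linarith), hj.zero, neg_neg, zero_add]
  · rw [GP, GM, max_eq_left ha, max_eq_right (by linarith), neg_zero, hj.zero, add_zero]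

end NiceJ

/-- The subgradient selection for `jr`. -/
def qfull (jr : ℝ → ℝ) (a : ℝ) : ℝ := qsel (GP jr) a - qsel (GM jr) (-a)

/-- The smooth approximations to `qfull`. -/
def Tfull (jr : ℝ → ℝ) (h a : ℝ) : ℝ := Tmol (GP jr) h a - Tmol (GM jr) h (-a)

/-- Derivative of `Tfull`. -/
def Dfull (jr : ℝ → ℝ) (h a : ℝ) : ℝ := Dmol (GP jr) h a + Dmol (GM jr) h (-a)

namespace NiceJ

variable {jr : ℝ → ℝ} {K : ℝ} (hj : NiceJ jr K)
include hj

theorem qfull_subgrad (a b : ℝ) : jr a + qfull jr a * (b - a) ≤ jr b := by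
  have h1 := hj.nice_GP.qsel_subgrad a b
  have h2 := hj.nice_GM.qsel_subgrad (-a) (-b)
  rw [hj.decomp a, hj.decomp b, qfull]
  have e : qsel (GM jr) (-a) * (-b - -a) = -(qsel (GM jr) (-a) * (b - a)) := by ring
  rw [e] at h2
  nlinarith

theorem qfull_abs_le (a : ℝ) : |qfull jr a| ≤ K := by
  have := hj.nice_GP.qsel_nonneg a
  have := hj.nice_GP.qsel_le_K a
  have := hj.nice_GM.qsel_nonneg (-a)
  have := hj.nice_GM.qsel_le_K (-a)
  rw [qfull, abs_le]
  constructor <;> linarith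

theorem qfull_zero : qfull jr 0 = 0 := by
  rw [qfull, neg_zero, hj.nice_GP.qsel_zero le_rfl, hj.nice_GM.qsel_zero le_rfl, sub_zero]

theorem qfull_mono : Monotone (qfull jr) := by
  intro a b hab
  have h1 := hj.nice_GP.qsel_mono hab
  have h2 := hj.nice_GM.qsel_mono (neg_le_neg hab)
  rw [qfull, qfull]
  linarith

theorem Tfull_abs_le {h a : ℝ} (hh : 0 < h) : |Tfull jr h a| ≤ K := by
  have u1 := (hj.nice_GP.Tmol_le (a := a) hh).trans (hj.nice_GP.lslope_le_K hh)
  have l1 := (hj.nice_GP.lslope_nonneg (a := a - h) hh).trans (hj.nice_GP.le_Tmol hh)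
  have u2 := (hj.nice_GM.Tmol_le (a := -a) hh).trans (hj.nice_GM.lslope_le_K hh)
  have l2 := (hj.nice_GM.lslope_nonneg (a := -a - h) hh).trans (hj.nice_GM.le_Tmol hh)
  rw [Tfull, abs_le]
  constructor <;> linarith

theorem Tfull_zero {h : ℝ} (hh : 0 < h) : Tfull jr h 0 = 0 := by
  rw [Tfull, neg_zero, hj.nice_GP.Tmol_zero hh, hj.nice_GM.Tmol_zero hh, sub_zero]

theorem hasDerivAt_Tfull {h : ℝ} (a : ℝ) : HasDerivAt (Tfull jr h) (Dfull jr h a) a := by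
  have h1 := hj.nice_GP.hasDerivAt_Tmol (h := h) a
  have h2 : HasDerivAt (fun a : ℝ => Tmol (GM jr) h (-a)) (Dmol (GM jr) h (-a) * (-1)) a :=
    (hj.nice_GM.hasDerivAt_Tmol (h := h) (-a)).comp a (hasDerivAt_neg a)
  have := h1.sub h2
  rw [show Dmol (GP jr) h a - Dmol (GM jr) h (-a) * (-1) = Dfull jr h a by rw [Dfull]; ring]
    at this
  exact this

theorem Dfull_nonneg {h a : ℝ} (hh : 0 < h) : 0 ≤ Dfull jr h a :=
  add_nonneg (hj.nice_GP.Dmol_nonneg hh) (hj.nice_GM.Dmol_nonneg hh)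

theorem Dfull_le {h a : ℝ} (hh : 0 < h) : Dfull jr h a ≤ 8 * K / h := by
  have := hj.nice_GP.Dmol_le (a := a) hh
  have := hj.nice_GM.Dmol_le (a := -a) hh
  rw [Dfull]
  have e : 8 * K / h = 4 * K / h + 4 * K / h := by ring
  rw [e]
  gcongr

theorem continuous_Dfull {h : ℝ} : Continuous (Dfull jr h) :=
  (hj.nice_GP.continuous_Dmol).add ((hj.nice_GM.continuous_Dmol).comp continuous_neg)

theorem tendsto_Tfull {a : ℝ} {u : ℕ → ℝ} (hu0 : ∀ n, 0 < u n)
    (hu : Tendsto u atTop (𝓝 0)) :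
    Tendsto (fun n => Tfull jr (u n) a) atTop (𝓝 (qfull jr a)) := by
  exact (hj.nice_GP.tendsto_Tmol hu0 hu).sub (hj.nice_GM.tendsto_Tmol hu0 hu)

end NiceJ

/-- Piecewise-linear cutoff equal to `1` on `[−R, R]`, `0` outside `[−R−1, R+1]`. -/
def cutoff (R s : ℝ) : ℝ := max 0 (min 1 (min (s + R + 1) (R + 1 - s)))

theorem cutoff_continuous (R : ℝ) : Continuous (cutoff R) := by
  unfold cutoff; fun_prop

theorem cutoff_nonneg (R s : ℝ) : 0 ≤ cutoff R s := le_max_left _ _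

theorem cutoff_le_one (R s : ℝ) : cutoff R s ≤ 1 := by
  rw [cutoff]
  apply max_le _ (min_le_left _ _)
  exact zero_le_one

theorem cutoff_eq_one {R s : ℝ} (hs : |s| ≤ R) : cutoff R s = 1 := by
  rw [abs_le] at hs
  rw [cutoff, max_eq_right]
  · rw [min_eq_left]
    exact le_min (by linarith) (by linarith)
  · exact le_min zero_le_one (le_min (by linarith) (by linarith))

theorem cutoff_eq_zero {R s : ℝ} (hs : R + 1 ≤ |s|) : cutoff R s = 0 := by
  rcases abs_le.1 (le_refl |s|) with ⟨h1, h2⟩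
  rcases le_or_gt s 0 with h | h
  · rw [abs_of_nonpos h] at hs
    rw [cutoff, max_eq_left]
    rw [min_le_iff]; right; rw [min_le_iff]; left; linarith
  · rw [abs_of_pos h] at hs
    rw [cutoff, max_eq_left]
    rw [min_le_iff]; right; rw [min_le_iff]; right; linarith

/-- The cut-off mollified subgradient approximation. -/
def Sfun (jr : ℝ → ℝ) (R h a : ℝ) : ℝ := ∫ t in (0:ℝ)..a, Dfull jr h t * cutoff R t

namespace NiceJ

variable {jr : ℝ → ℝ} {K : ℝ} (hj : NiceJ jr K)
include hj

theorem continuous_DC {R h : ℝ} : Continuous (fun t => Dfull jr h t * cutoff R t) :=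
  hj.continuous_Dfull.mul (cutoff_continuous R)

theorem hasDerivAt_Sfun {R h : ℝ} (a : ℝ) :
    HasDerivAt (Sfun jr R h) (Dfull jr h a * cutoff R a) a := by
  exact intervalIntegral.integral_hasDerivAt_right
    (hj.continuous_DC.intervalIntegrable _ _)
    (hj.continuous_DC.stronglyMeasurableAtFilter _ _)
    hj.continuous_DC.continuousAt

theorem Sfun_eq_Tfull {R h a : ℝ} (hh : 0 < h) (ha : |a| ≤ R) :
    Sfun jr R h a = Tfull jr h a := by
  have h1 : Sfun jr R h a = ∫ t in (0:ℝ)..a, Dfull jr h t := by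
    rw [Sfun]
    apply intervalIntegral.integral_congr
    intro t ht
    have hR0 : 0 ≤ R := (abs_nonneg a).trans ha
    have ht' : |t| ≤ R := by
      rw [Set.uIcc_eq_union] at ht
      rcases abs_le.1 ha with ⟨g1, g2⟩
      rcases (Set.mem_union _ _ _).1 ht with h | h
      · rw [abs_le]; exact ⟨by linarith [h.1], by linarith [h.2]⟩
      · rw [abs_le]; exact ⟨by linarith [h.1], by linarith [h.2]⟩
    simp [cutoff_eq_one ht']
  rw [h1]
  have h2 : (∫ t in (0:ℝ)..a, Dfull jr h t) = Tfull jr h a - Tfull jr h 0 := by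
    apply intervalIntegral.integral_eq_sub_of_hasDerivAt
    · intro x _
      exact hj.hasDerivAt_Tfull x
    · exact hj.continuous_Dfull.intervalIntegrable _ _
  rw [h2, hj.Tfull_zero hh, sub_zero]

theorem memP0_Sfun {R h : ℝ} (hh : 0 < h) :
    MemP0 (fun a => Sfun jr R h a / (8 * K / h + 1)) := by
  set c : ℝ := 8 * K / h + 1 with hc
  have hc0 : 0 < c := by
    rw [hc]
    have : 0 ≤ 8 * K / h := div_nonneg (by linarith [hj.Knn]) hh.le
    linarith
  have hd : ∀ a, HasDerivAt (fun a => Sfun jr R h a / c)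
      (Dfull jr h a * cutoff R a / c) a := fun a => (hj.hasDerivAt_Sfun a).div_const c
  have hderiv : deriv (fun a => Sfun jr R h a / c) = fun a => Dfull jr h a * cutoff R a / c :=
    funext fun a => (hd a).deriv
  refine ⟨?_, ?_, ?_, ?_⟩
  · rw [contDiff_one_iff_deriv]
    refine ⟨fun a => (hd a).differentiableAt, ?_⟩
    rw [hderiv]
    exact (hj.continuous_DC.div_const c)
  · show Sfun jr R h 0 / c = 0
    unfold Sfun
    rw [intervalIntegral.integral_same, zero_div]
  · intro r
    rw [hderiv]
    constructor
    · apply div_nonneg _ hc0.le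
      exact mul_nonneg (hj.Dfull_nonneg hh) (cutoff_nonneg R r)
    · rw [div_le_one hc0]
      calc Dfull jr h r * cutoff R r ≤ Dfull jr h r * 1 :=
            mul_le_mul_of_nonneg_left (cutoff_le_one R r) (hj.Dfull_nonneg hh)
        _ = Dfull jr h r := mul_one _
        _ ≤ 8 * K / h := hj.Dfull_le hh
        _ ≤ c := by rw [hc]; linarith
  · rw [hderiv]
    apply HasCompactSupport.intro (isCompact_Icc (a := -(R+1)) (b := R+1))
    intro x hx
    have : R + 1 ≤ |x| := by
      rw [Set.mem_Icc] at hx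
      rcases le_or_gt x 0 with h | h
      · rw [abs_of_nonpos h]
        by_contra hcon
        push_neg at hcon
        exact hx ⟨by linarith, by linarith⟩
      · rw [abs_of_pos h]
        by_contra hcon
        push_neg at hcon
        exact hx ⟨by linarith, by linarith⟩
    rw [cutoff_eq_zero this, mul_zero, zero_div]

end NiceJ

namespace NiceJ

variable {jr : ℝ → ℝ} {K : ℝ} (hj : NiceJ jr K)
include hj

theorem continuous : Continuous jr := by
  rcases eq_or_lt_of_le hj.Knn with hK0 | hKpos
  · have h : ∀ a, jr a = jr 0 := by
      intro a
      have h2 := hj.lip a 0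
      rw [← hK0, zero_mul] at h2
      have h3 : |jr a - jr 0| = 0 := le_antisymm h2 (abs_nonneg _)
      have := abs_eq_zero.1 h3; linarith
    have e : jr = fun _ => jr 0 := funext h
    rw [e]; exact continuous_const
  · have : LipschitzWith ⟨K, hj.Knn⟩ jr := by
      apply LipschitzWith.of_dist_le_mul
      intro a b
      rw [Real.dist_eq, Real.dist_eq]; exact hj.lip a b
    exact this.continuous

theorem continuous_Tfull {h : ℝ} : Continuous (Tfull jr h) :=
  continuous_iff_continuousAt.2 fun x => (hj.hasDerivAt_Tfull x).continuousAt

theorem abs_le_K_mul_abs (a : ℝ) : |jr a| ≤ K * |a| := by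
  have := hj.lip a 0
  rw [hj.zero] at this
  simpa using this

section Meas

variable {Ω : Type*} [MeasurableSpace Ω] {μ : MeasureTheory.Measure Ω}
variable {f g : Ω → ℝ}

theorem integral_mul_qfull_nonneg
    (hf : AEStronglyMeasurable f μ) (hg : AEStronglyMeasurable g μ)
    (hgi : Integrable g μ) {R : ℝ} (hR : ∀ᵐ x ∂μ, |f x| ≤ R)
    (lemA : ∀ T : ℝ → ℝ, MemP0 T → 0 ≤ ∫ x, g x * T (f x) ∂μ) :
    0 ≤ ∫ x, g x * qfull jr (f x) ∂μ := by
  set u : ℕ → ℝ := fun n => 1 / ((n : ℝ) + 1) with hu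
  have hu0 : ∀ n, 0 < u n := fun n => by positivity
  have hulim : Tendsto u atTop (𝓝 0) := tendsto_one_div_add_atTop_nhds_zero_nat
  -- each approximation has nonnegative pairing
  have key : ∀ n : ℕ, 0 ≤ ∫ x, g x * Tfull jr (u n) (f x) ∂μ := by
    intro n
    set c : ℝ := 8 * K / u n + 1 with hc
    have hc0 : 0 < c := by
      have : 0 ≤ 8 * K / u n := div_nonneg (by linarith [hj.Knn]) (hu0 n).le
      rw [hc]; linarith
    have h0 := lemA _ (hj.memP0_Sfun (R := R) (hu0 n))
    have e1 : ∀ᵐ x ∂μ, g x * Sfun jr R (u n) (f x) / c = g x * Tfull jr (u n) (f x) / c := by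
      filter_upwards [hR] with x hx
      rw [hj.Sfun_eq_Tfull (hu0 n) hx]
    have e2 : (∫ x, g x * (Sfun jr R (u n) (f x) / c) ∂μ)
        = ∫ x, g x * Tfull jr (u n) (f x) / c ∂μ := by
      refine MeasureTheory.integral_congr_ae ?_
      filter_upwards [e1] with x hx
      rw [← hx]; ring
    rw [e2] at h0
    have e3 : (∫ x, g x * Tfull jr (u n) (f x) / c ∂μ)
        = (∫ x, g x * Tfull jr (u n) (f x) ∂μ) / c := by
      rw [MeasureTheory.integral_div]
    rw [e3] at h0
    rcases div_nonneg_iff.1 h0 with h | h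
    · exact h.1
    · rcases lt_or_ge 0 c with hcc | hcc
      · linarith [h.2]
      · linarith
  -- dominated convergence
  have hmeasn : ∀ n : ℕ, AEStronglyMeasurable (fun x => g x * Tfull jr (u n) (f x)) μ :=
    fun n => hg.mul (hj.continuous_Tfull.comp_aestronglyMeasurable hf)
  have hboundInt : Integrable (fun x => K * |g x|) μ := hgi.abs.const_mul K
  have hbound : ∀ n : ℕ, ∀ᵐ x ∂μ, ‖g x * Tfull jr (u n) (f x)‖ ≤ K * |g x| := by
    intro n
    filter_upwards with x
    rw [norm_mul, Real.norm_eq_abs, Real.norm_eq_abs, mul_comm]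
    exact mul_le_mul_of_nonneg_right (hj.Tfull_abs_le (hu0 n)) (abs_nonneg _)
  have hptlim : ∀ᵐ x ∂μ, Tendsto (fun n => g x * Tfull jr (u n) (f x)) atTop
      (𝓝 (g x * qfull jr (f x))) := by
    filter_upwards with x
    exact (hj.tendsto_Tfull hu0 hulim).const_mul (g x)
  have hconv := MeasureTheory.tendsto_integral_of_dominated_convergence
    (fun x => K * |g x|) hmeasn hboundInt hbound hptlim
  exact le_of_tendsto_of_tendsto' tendsto_const_nhds hconv key

theorem integral_comp_le
    (hf : AEStronglyMeasurable f μ) (hg : AEStronglyMeasurable g μ)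
    (hfi : Integrable f μ) (hgi : Integrable g μ)
    {R : ℝ} (hR : ∀ᵐ x ∂μ, |f x| ≤ R)
    (lemA : ∀ T : ℝ → ℝ, MemP0 T → 0 ≤ ∫ x, g x * T (f x) ∂μ)
    {lam : ℝ} (hlam : 0 < lam) :
    ∫ x, jr (f x) ∂μ ≤ ∫ x, jr (f x + lam * g x) ∂μ := by
  have hqf : AEStronglyMeasurable (fun x => qfull jr (f x)) μ :=
    ((hj.qfull_mono.measurable).comp_aemeasurable hf.aemeasurable).aestronglyMeasurable
  have hI1 : Integrable (fun x => jr (f x)) μ := by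
    refine MeasureTheory.Integrable.mono' (hfi.abs.const_mul K)
      (hj.continuous.comp_aestronglyMeasurable hf) ?_
    filter_upwards with x
    rw [Real.norm_eq_abs]
    exact hj.abs_le_K_mul_abs (f x)
  have hI2 : Integrable (fun x => jr (f x + lam * g x)) μ := by
    refine MeasureTheory.Integrable.mono' (((hfi.add (hgi.const_mul lam)).abs.const_mul K))
      (hj.continuous.comp_aestronglyMeasurable (hf.add (hg.const_mul lam))) ?_
    filter_upwards with x
    rw [Real.norm_eq_abs]
    exact hj.abs_le_K_mul_abs (f x + lam * g x)
  have hI3 : Integrable (fun x => g x * qfull jr (f x)) μ := by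
    refine MeasureTheory.Integrable.mono' (hgi.abs.const_mul K) (hg.mul hqf) ?_
    filter_upwards with x
    rw [Real.norm_eq_abs, abs_mul, mul_comm]
    exact mul_le_mul_of_nonneg_right (hj.qfull_abs_le (f x)) (abs_nonneg _)
  have hpt : ∀ x, jr (f x) + lam * (g x * qfull jr (f x)) ≤ jr (f x + lam * g x) := by
    intro x
    have := hj.qfull_subgrad (f x) (f x + lam * g x)
    have e : qfull jr (f x) * (f x + lam * g x - f x) = lam * (g x * qfull jr (f x)) := by
      ring
    rw [e] at this
    exact this
  have hint : (∫ x, (jr (f x) + lam * (g x * qfull jr (f x))) ∂μ)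
      ≤ ∫ x, jr (f x + lam * g x) ∂μ := by
    apply MeasureTheory.integral_mono (hI1.add (hI3.const_mul lam)) hI2
    intro x
    exact hpt x
  rw [MeasureTheory.integral_add hI1 (hI3.const_mul lam)] at hint
  rw [MeasureTheory.integral_const_mul] at hint
  have hq0 := hj.integral_mul_qfull_nonneg hf hg hgi hR lemA
  nlinarith

end Meas

end NiceJ

/-- Lipschitz (Pasch–Hausdorff) regularization of `j`. -/
def jInf (j : ℝ → ℝ≥0∞) (n : ℕ) (r : ℝ) : ℝ≥0∞ :=
  ⨅ s : ℝ, (j s + ENNReal.ofReal (((n : ℝ) + 1) * |r - s|))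

/-- Its real-valued version. -/
def jReal (j : ℝ → ℝ≥0∞) (n : ℕ) (r : ℝ) : ℝ := (jInf j n r).toReal

namespace MemJ0

variable {j : ℝ → ℝ≥0∞} (hj : MemJ0 j)

theorem jInf_le_self (n : ℕ) (r : ℝ) : jInf j n r ≤ j r := by
  have := iInf_le (fun s : ℝ => (j s + ENNReal.ofReal (((n : ℝ) + 1) * |r - s|))) r
  simpa [jInf] using this

include hj

theorem jInf_le_lin (n : ℕ) (r : ℝ) : jInf j n r ≤ ENNReal.ofReal (((n : ℝ) + 1) * |r|) := by
  have := iInf_le (fun s : ℝ => (j s + ENNReal.ofReal (((n : ℝ) + 1) * |r - s|))) 0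
  simpa [jInf, hj.2.1] using this

theorem jInf_ne_top (n : ℕ) (r : ℝ) : jInf j n r ≠ ⊤ :=
  ne_top_of_le_ne_top ENNReal.ofReal_ne_top (hj.jInf_le_lin n r)

omit hj

theorem jInf_mono_n {j : ℝ → ℝ≥0∞} {m n : ℕ} (hmn : m ≤ n) (r : ℝ) :
    jInf j m r ≤ jInf j n r := by
  apply le_iInf
  intro s
  refine le_trans (iInf_le _ s) ?_
  gcongr <;> exact_mod_cast hmn

theorem jInf_triangle {j : ℝ → ℝ≥0∞} (n : ℕ) (a b : ℝ) :
    jInf j n a ≤ jInf j n b + ENNReal.ofReal (((n : ℝ) + 1) * |a - b|) := by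
  simp only [jInf]
  rw [ENNReal.iInf_add]
  apply le_iInf
  intro s
  refine le_trans (iInf_le _ s) ?_
  rw [add_assoc]
  gcongr
  rw [← ENNReal.ofReal_add (by positivity) (by positivity)]
  apply ENNReal.ofReal_le_ofReal
  rw [← mul_add]
  have habs : |a - s| ≤ |b - s| + |a - b| := by
    have := abs_add_le (a - b) (b - s)
    rw [show a - b + (b - s) = a - s by ring] at this
    linarith
  nlinarith [abs_nonneg (a - s), abs_nonneg (b - s), abs_nonneg (a - b)]

include hj

theorem jInf_zero (n : ℕ) : jInf j n 0 = 0 := by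
  apply le_antisymm _ zero_le
  have := hj.jInf_le_lin n 0
  simpa using this

theorem jInf_convex (n : ℕ) {a b t : ℝ} (ht0 : 0 ≤ t) (ht1 : t ≤ 1) :
    jInf j n (t * a + (1 - t) * b) ≤
      ENNReal.ofReal t * jInf j n a + ENNReal.ofReal (1 - t) * jInf j n b := by
  have core : ∀ s s' : ℝ,
      jInf j n (t * a + (1 - t) * b) ≤
        ENNReal.ofReal t * (j s + ENNReal.ofReal (((n : ℝ) + 1) * |a - s|)) +
        ENNReal.ofReal (1 - t) * (j s' + ENNReal.ofReal (((n : ℝ) + 1) * |b - s'|)) := by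
    intro s s'
    refine le_trans (iInf_le _ (t * s + (1 - t) * s')) ?_
    have hconv := hj.2.2 s s' t ht0 ht1
    have habs : ENNReal.ofReal (((n : ℝ) + 1) * |t * a + (1 - t) * b - (t * s + (1 - t) * s')|)
        ≤ ENNReal.ofReal t * ENNReal.ofReal (((n : ℝ) + 1) * |a - s|) +
          ENNReal.ofReal (1 - t) * ENNReal.ofReal (((n : ℝ) + 1) * |b - s'|) := by
      rw [← ENNReal.ofReal_mul ht0, ← ENNReal.ofReal_mul (by linarith : (0:ℝ) ≤ 1 - t),
        ← ENNReal.ofReal_add (mul_nonneg ht0 (by positivity))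
          (mul_nonneg (by linarith) (by positivity))]
      apply ENNReal.ofReal_le_ofReal
      have h1 : |t * a + (1 - t) * b - (t * s + (1 - t) * s')|
          ≤ t * |a - s| + (1 - t) * |b - s'| := by
        have e : t * a + (1 - t) * b - (t * s + (1 - t) * s')
            = t * (a - s) + (1 - t) * (b - s') := by ring
        rw [e]
        refine le_trans (abs_add_le _ _) ?_
        rw [abs_mul, abs_mul, abs_of_nonneg ht0, abs_of_nonneg (by linarith : (0:ℝ) ≤ 1 - t)]
      nlinarith [abs_nonneg (a - s), abs_nonneg (b - s'),
        abs_nonneg (t * a + (1 - t) * b - (t * s + (1 - t) * s'))]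
    calc j (t * s + (1 - t) * s')
          + ENNReal.ofReal (((n : ℝ) + 1) * |t * a + (1 - t) * b - (t * s + (1 - t) * s')|)
        ≤ (ENNReal.ofReal t * j s + ENNReal.ofReal (1 - t) * j s') +
          (ENNReal.ofReal t * ENNReal.ofReal (((n : ℝ) + 1) * |a - s|) +
           ENNReal.ofReal (1 - t) * ENNReal.ofReal (((n : ℝ) + 1) * |b - s'|)) :=
          add_le_add hconv habs
      _ = ENNReal.ofReal t * (j s + ENNReal.ofReal (((n : ℝ) + 1) * |a - s|)) +
          ENNReal.ofReal (1 - t) * (j s' + ENNReal.ofReal (((n : ℝ) + 1) * |b - s'|)) := by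
          ring
  have e1 : ENNReal.ofReal t * jInf j n a
      = ⨅ s : ℝ, ENNReal.ofReal t * (j s + ENNReal.ofReal (((n : ℝ) + 1) * |a - s|)) :=
    ENNReal.mul_iInf' (fun h => absurd h ENNReal.ofReal_ne_top) (fun _ => ⟨0⟩)
  have e2 : ENNReal.ofReal (1 - t) * jInf j n b
      = ⨅ s : ℝ, ENNReal.ofReal (1 - t) * (j s + ENNReal.ofReal (((n : ℝ) + 1) * |b - s|)) :=
    ENNReal.mul_iInf' (fun h => absurd h ENNReal.ofReal_ne_top) (fun _ => ⟨0⟩)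
  rw [e1, e2, ENNReal.iInf_add]
  apply le_iInf
  intro s
  rw [ENNReal.add_iInf]
  apply le_iInf
  intro s'
  exact core s s'

theorem iSup_jInf (r : ℝ) : ⨆ n : ℕ, jInf j n r = j r := by
  apply le_antisymm (iSup_le fun n => jInf_le_self (j := j) n r)
  apply le_of_forall_lt
  intro c hc
  obtain ⟨c', hcc', hc'⟩ := exists_between hc
  have hc'top : c' ≠ ⊤ := by
    intro h
    rw [h] at hc'
    exact absurd hc' (by simp)
  have hev := hj.1 r c' hc'
  rw [Metric.eventually_nhds_iff] at hev
  obtain ⟨ε, hε, hball⟩ := hev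
  obtain ⟨n, hn⟩ := exists_nat_ge (c'.toReal / ε)
  have hkey : c' ≤ jInf j n r := by
    apply le_iInf
    intro s
    rcases lt_or_ge (dist s r) ε with hd | hd
    · exact le_trans (hball hd).le le_self_add
    · have h1 : c' = ENNReal.ofReal c'.toReal := (ENNReal.ofReal_toReal hc'top).symm
      have h2 : c'.toReal ≤ ((n : ℝ) + 1) * |r - s| := by
        have h3 : c'.toReal / ε ≤ (n : ℝ) := hn
        have h4 : c'.toReal ≤ (n : ℝ) * ε := by
          rw [div_le_iff₀ hε] at h3; linarith
        have h5 : ε ≤ |r - s| := by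
          rw [Real.dist_eq, abs_sub_comm] at hd; exact hd
        nlinarith [Nat.cast_nonneg (α := ℝ) n, ENNReal.toReal_nonneg (a := c')]
      calc c' = ENNReal.ofReal c'.toReal := h1
        _ ≤ ENNReal.ofReal (((n : ℝ) + 1) * |r - s|) := ENNReal.ofReal_le_ofReal h2
        _ ≤ j s + ENNReal.ofReal (((n : ℝ) + 1) * |r - s|) := le_add_self
  calc c < c' := hcc'
    _ ≤ jInf j n r := hkey
    _ ≤ ⨆ n : ℕ, jInf j n r := le_iSup (fun n : ℕ => jInf j n r) n

theorem ofReal_jReal (n : ℕ) (r : ℝ) : ENNReal.ofReal (jReal j n r) = jInf j n r := by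
  rw [jReal, ENNReal.ofReal_toReal (hj.jInf_ne_top n r)]

theorem niceJ_jReal (n : ℕ) : NiceJ (jReal j n) ((n : ℝ) + 1) := by
  have hne := hj.jInf_ne_top
  constructor
  · refine ⟨convex_univ, ?_⟩
    intro a _ b _ t t' ht0 ht0' hsum
    have ht1 : t ≤ 1 := by linarith
    have et' : t' = 1 - t := by linarith
    subst et'
    have := hj.jInf_convex n (a := a) (b := b) ht0 ht1
    have htr := ENNReal.toReal_le_toReal (hj.jInf_ne_top n _ ) (by
      exact ENNReal.add_ne_top.2 ⟨ENNReal.mul_ne_top ENNReal.ofReal_ne_top (hne n a),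
        ENNReal.mul_ne_top ENNReal.ofReal_ne_top (hne n b)⟩) |>.2 this
    rw [ENNReal.toReal_add (ENNReal.mul_ne_top ENNReal.ofReal_ne_top (hne n a))
      (ENNReal.mul_ne_top ENNReal.ofReal_ne_top (hne n b)), ENNReal.toReal_mul,
      ENNReal.toReal_mul, ENNReal.toReal_ofReal ht0,
      ENNReal.toReal_ofReal (by linarith : (0:ℝ) ≤ 1 - t)] at htr
    simpa [jReal, smul_eq_mul] using htr
  · rw [jReal, hj.jInf_zero n, ENNReal.toReal_zero]
  · intro r
    exact ENNReal.toReal_nonneg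
  · intro a b
    rw [_root_.abs_le]
    have h1 := jInf_triangle (j := j) n a b
    have h2 := jInf_triangle (j := j) n b a
    have htr1 := ENNReal.toReal_le_toReal (hne n a) (by
      exact ENNReal.add_ne_top.2 ⟨hne n b, ENNReal.ofReal_ne_top⟩) |>.2 h1
    have htr2 := ENNReal.toReal_le_toReal (hne n b) (by
      exact ENNReal.add_ne_top.2 ⟨hne n a, ENNReal.ofReal_ne_top⟩) |>.2 h2
    rw [ENNReal.toReal_add (hne n b) ENNReal.ofReal_ne_top,
      ENNReal.toReal_ofReal (by positivity)] at htr1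
    rw [ENNReal.toReal_add (hne n a) ENNReal.ofReal_ne_top,
      ENNReal.toReal_ofReal (by positivity)] at htr2
    rw [abs_sub_comm b a] at htr2
    constructor
    · rw [jReal, jReal]; linarith
    · rw [jReal, jReal]; linarith
  · positivity

end MemJ0

theorem MemJ0.lintegral_le {Ω : Type*} [MeasurableSpace Ω] {μ : MeasureTheory.Measure Ω}
    {j : ℝ → ℝ≥0∞} (hj : MemJ0 j) {f g : Ω → ℝ}
    (hf : AEStronglyMeasurable f μ) (hg : AEStronglyMeasurable g μ)
    (hfi : Integrable f μ) (hgi : Integrable g μ)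
    {R : ℝ} (hR : ∀ᵐ x ∂μ, |f x| ≤ R)
    (lemA : ∀ T : ℝ → ℝ, MemP0 T → 0 ≤ ∫ x, g x * T (f x) ∂μ)
    {lam : ℝ} (hlam : 0 < lam) :
    ∫⁻ x, j (f x) ∂μ ≤ ∫⁻ x, j (f x + lam * g x) ∂μ := by
  have hnice : ∀ n : ℕ, NiceJ (jReal j n) ((n : ℝ) + 1) := fun n => hj.niceJ_jReal n
  have hmeasf : ∀ n : ℕ, AEMeasurable (fun x => jInf j n (f x)) μ := by
    intro n
    have : (fun x => jInf j n (f x)) = fun x => ENNReal.ofReal (jReal j n (f x)) := by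
      funext x
      rw [hj.ofReal_jReal n (f x)]
    rw [this]
    exact ENNReal.measurable_ofReal.comp_aemeasurable
      (((hnice n).continuous.measurable).comp_aemeasurable hf.aemeasurable)
  have hint1 : ∀ n : ℕ, Integrable (fun x => jReal j n (f x)) μ := by
    intro n
    refine MeasureTheory.Integrable.mono' (hfi.abs.const_mul ((n : ℝ) + 1))
      ((hnice n).continuous.comp_aestronglyMeasurable hf) ?_
    filter_upwards with x
    rw [Real.norm_eq_abs]
    exact (hnice n).abs_le_K_mul_abs (f x)
  have hint2 : ∀ n : ℕ, Integrable (fun x => jReal j n (f x + lam * g x)) μ := by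
    intro n
    refine MeasureTheory.Integrable.mono'
      (((hfi.add (hgi.const_mul lam)).abs.const_mul ((n : ℝ) + 1)))
      ((hnice n).continuous.comp_aestronglyMeasurable (hf.add (hg.const_mul lam))) ?_
    filter_upwards with x
    rw [Real.norm_eq_abs]
    exact (hnice n).abs_le_K_mul_abs (f x + lam * g x)
  have step : ∀ n : ℕ, (∫⁻ x, jInf j n (f x) ∂μ) ≤ ∫⁻ x, j (f x + lam * g x) ∂μ := by
    intro n
    have e1 : (∫⁻ x, jInf j n (f x) ∂μ) = ∫⁻ x, ENNReal.ofReal (jReal j n (f x)) ∂μ :=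
      lintegral_congr fun x => (hj.ofReal_jReal n (f x)).symm
    have e2 : (∫⁻ x, ENNReal.ofReal (jReal j n (f x)) ∂μ)
        = ENNReal.ofReal (∫ x, jReal j n (f x) ∂μ) :=
      (MeasureTheory.ofReal_integral_eq_lintegral_ofReal (hint1 n)
        (Filter.Eventually.of_forall fun x => ENNReal.toReal_nonneg)).symm
    have e3 : ENNReal.ofReal (∫ x, jReal j n (f x) ∂μ)
        ≤ ENNReal.ofReal (∫ x, jReal j n (f x + lam * g x) ∂μ) :=
      ENNReal.ofReal_le_ofReal
        ((hnice n).integral_comp_le hf hg hfi hgi hR lemA hlam)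
    have e4 : ENNReal.ofReal (∫ x, jReal j n (f x + lam * g x) ∂μ)
        = ∫⁻ x, ENNReal.ofReal (jReal j n (f x + lam * g x)) ∂μ :=
      MeasureTheory.ofReal_integral_eq_lintegral_ofReal (hint2 n)
        (Filter.Eventually.of_forall fun x => ENNReal.toReal_nonneg)
    have e5 : (∫⁻ x, ENNReal.ofReal (jReal j n (f x + lam * g x)) ∂μ)
        ≤ ∫⁻ x, j (f x + lam * g x) ∂μ := by
      apply lintegral_mono
      intro x
      show ENNReal.ofReal (jReal j n (f x + lam * g x)) ≤ j (f x + lam * g x)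
      rw [hj.ofReal_jReal n]
      exact MemJ0.jInf_le_self (j := j) n _
    rw [e1, e2]
    exact le_trans e3 (le_trans e4.le e5)
  have efin : (∫⁻ x, j (f x) ∂μ) = ⨆ n : ℕ, ∫⁻ x, jInf j n (f x) ∂μ := by
    rw [← MeasureTheory.lintegral_iSup' hmeasf
      (Filter.Eventually.of_forall fun x m n hmn => MemJ0.jInf_mono_n (j := j) hmn (f x))]
    exact lintegral_congr fun x => (hj.iSup_jInf (f x)).symm
  rw [efin]
  exact iSup_le step

section Reflect

variable {T : ℝ → ℝ}

theorem reflect_hasDerivAt (hT : ContDiff ℝ 1 T) (r : ℝ) :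
    HasDerivAt (fun r => -T (-r)) (deriv T (-r)) r := by
  have h1 : HasDerivAt T (deriv T (-r)) (-r) :=
    ((hT.differentiable one_ne_zero) (-r)).hasDerivAt
  have h2 := (h1.comp r (hasDerivAt_neg r)).neg
  have e : -(deriv T (-r) * -1) = deriv T (-r) := by ring
  rw [e] at h2
  exact h2

theorem reflect_deriv (hT : ContDiff ℝ 1 T) :
    deriv (fun r => -T (-r)) = fun r => deriv T (-r) :=
  funext fun r => (reflect_hasDerivAt hT r).deriv

theorem MemP0.reflect (hT : MemP0 T) : MemP0 (fun r => -T (-r)) := by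
  obtain ⟨hcd, h0, hder, hcs⟩ := hT
  refine ⟨?_, by show -T (-0) = 0; rw [neg_zero, h0, neg_zero], ?_, ?_⟩
  · rw [contDiff_one_iff_deriv]
    refine ⟨fun r => (reflect_hasDerivAt hcd r).differentiableAt, ?_⟩
    rw [reflect_deriv hcd]
    have : Continuous (deriv T) := (contDiff_one_iff_deriv.1 hcd).2
    exact this.comp continuous_neg
  · intro r
    rw [reflect_deriv hcd]
    exact hder (-r)
  · rw [reflect_deriv hcd]
    have : (fun r => deriv T (-r)) = (deriv T) ∘ (Homeomorph.neg ℝ) := rfl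
    rw [this]
    exact hcs.comp_homeomorph (Homeomorph.neg ℝ)

theorem MemP0.abs_le (hT : MemP0 T) (r : ℝ) : |T r| ≤ |r| := by
  obtain ⟨hcd, h0, hder, _⟩ := hT
  have hlip : LipschitzWith 1 T := by
    apply lipschitzWith_of_nnnorm_deriv_le (hcd.differentiable one_ne_zero)
    intro x
    have h1 := hder x
    rw [← NNReal.coe_le_coe, coe_nnnorm, Real.norm_eq_abs, NNReal.coe_one]
    rw [_root_.abs_le]
    exact ⟨by linarith [h1.1], h1.2⟩
  have := hlip.dist_le_mul r 0
  rw [h0] at this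
  simpa [Real.dist_eq] using this

end Reflect

section MemTop

variable {Ω : Type*} [MeasurableSpace Ω] {μ : MeasureTheory.Measure Ω}

theorem memtop_bound {v : Ω → ℝ} (hv : MeasureTheory.MemLp v ⊤ μ) :
    ∃ C : ℝ, 0 ≤ C ∧ ∀ᵐ x ∂μ, |v x| ≤ C := by
  have h1 : eLpNormEssSup v μ ≠ ⊤ := by
    have h2 := hv.2
    rw [eLpNorm_exponent_top] at h2
    exact h2.ne
  refine ⟨(eLpNormEssSup v μ).toReal, ENNReal.toReal_nonneg, ?_⟩
  filter_upwards [ae_le_eLpNormEssSup (f := v) (μ := μ)] with x hx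
  have h2 := ENNReal.toReal_mono h1 hx
  rwa [toReal_enorm, Real.norm_eq_abs] at h2

end MemTop

/-- **(H2*) implies complete accretivity of `A = (∂E)|_{L^{1∩∞}}`**
(Bénilan–Crandall). Let `(Ω, 𝔅, μ)` be a σ-finite measure space and
`E : L² → (−∞, +∞]` proper, lower semicontinuous and convex, satisfying
(H2*): `E(u + T∘(û − u)) + E(û − T∘(û − u)) ≤ E(u) + E(û)` for all
`u, û ∈ L²` and `T ∈ P₀`. Then the part `A = ∂E ∩ (L^{1∩∞} × L^{1∩∞})` is
completely accretive: for all `(u, v), (û, v̂) ∈ A`, `λ > 0` and `j ∈ J₀`,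
`∫ j(u − û) dμ ≤ ∫ j(u − û + λ(v − v̂)) dμ`. -/
theorem completely_accretive_of_H2star
    (μ : Measure Ω) [SigmaFinite μ]
    (E : Lp ℝ 2 μ → WithTop ℝ)
    (hproper : ∃ u : Lp ℝ 2 μ, E u < ⊤)
    (hlsc : LowerSemicontinuous E)
    (hconv : ∀ u v : Lp ℝ 2 μ, ∀ t : ℝ, 0 ≤ t → t ≤ 1 →
      E (t • u + (1 - t) • v) ≤ (t : WithTop ℝ) * E u + ((1 - t : ℝ) : WithTop ℝ) * E v)
    (H2star : ∀ u uhat : Lp ℝ 2 μ, ∀ T : ℝ → ℝ, MemP0 T →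
      ∀ w z : Lp ℝ 2 μ,
        (w : Ω → ℝ) =ᵐ[μ] (fun x => u x + T (uhat x - u x)) →
        (z : Ω → ℝ) =ᵐ[μ] (fun x => uhat x - T (uhat x - u x)) →
        E w + E z ≤ E u + E uhat) :
    ∀ p ∈ PartA μ E, ∀ q ∈ PartA μ E, ∀ lam : ℝ, 0 < lam →
      ∀ j : ℝ → ℝ≥0∞, MemJ0 j →
        ∫⁻ x, j (p.1 x - q.1 x) ∂μ ≤
          ∫⁻ x, j (p.1 x - q.1 x + lam * (p.2 x - q.2 x)) ∂μ := by
  intro p hp q hq lam hlam j hjmem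
  obtain ⟨hpS, hp11, hp1t, hp21, hp2t⟩ := hp
  obtain ⟨hqS, hq11, hq1t, hq21, hq2t⟩ := hq
  have hfm : AEStronglyMeasurable (fun x => p.1 x - q.1 x) μ :=
    (Lp.aestronglyMeasurable p.1).sub (Lp.aestronglyMeasurable q.1)
  have hgm : AEStronglyMeasurable (fun x => p.2 x - q.2 x) μ :=
    (Lp.aestronglyMeasurable p.2).sub (Lp.aestronglyMeasurable q.2)
  have hfi : Integrable (fun x => p.1 x - q.1 x) μ :=
    (memLp_one_iff_integrable.1 hp11).sub (memLp_one_iff_integrable.1 hq11)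
  have hgi : Integrable (fun x => p.2 x - q.2 x) μ :=
    (memLp_one_iff_integrable.1 hp21).sub (memLp_one_iff_integrable.1 hq21)
  obtain ⟨C1, hC1, hb1⟩ := memtop_bound hp1t
  obtain ⟨C2, hC2, hb2⟩ := memtop_bound hq1t
  obtain ⟨C3, hC3, hb3⟩ := memtop_bound hp2t
  obtain ⟨C4, hC4, hb4⟩ := memtop_bound hq2t
  have hR : ∀ᵐ x ∂μ, |p.1 x - q.1 x| ≤ C1 + C2 := by
    filter_upwards [hb1, hb2] with x h1 h2
    calc |p.1 x - q.1 x| ≤ |p.1 x| + |q.1 x| := abs_sub _ _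
      _ ≤ C1 + C2 := add_le_add h1 h2
  have lemA : ∀ T : ℝ → ℝ, MemP0 T →
      0 ≤ ∫ x, (p.2 x - q.2 x) * T (p.1 x - q.1 x) ∂μ := by
    intro T hT
    set Tr : ℝ → ℝ := fun r => -T (-r) with hTrdef
    have hTr : MemP0 Tr := hT.reflect
    have hd2 : MemLp (fun x => q.1 x - p.1 x) 2 μ := (Lp.memLp q.1).sub (Lp.memLp p.1)
    have hTrc : Continuous Tr := hTr.1.continuous
    have hTrm : AEStronglyMeasurable (fun x => Tr (q.1 x - p.1 x)) μ :=
      hTrc.comp_aestronglyMeasurable hd2.aestronglyMeasurable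
    have hTd2 : MemLp (fun x => Tr (q.1 x - p.1 x)) 2 μ := by
      refine hd2.of_le hTrm ?_
      filter_upwards with x
      rw [Real.norm_eq_abs, Real.norm_eq_abs]
      exact hTr.abs_le _
    have hw : MemLp (fun x => p.1 x + Tr (q.1 x - p.1 x)) 2 μ := (Lp.memLp p.1).add hTd2
    have hz : MemLp (fun x => q.1 x - Tr (q.1 x - p.1 x)) 2 μ := (Lp.memLp q.1).sub hTd2
    have hwcoe : (hw.toLp _ : Ω → ℝ) =ᵐ[μ] fun x => p.1 x + Tr (q.1 x - p.1 x) :=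
      hw.coeFn_toLp
    have hzcoe : (hz.toLp _ : Ω → ℝ) =ᵐ[μ] fun x => q.1 x - Tr (q.1 x - p.1 x) :=
      hz.coeFn_toLp
    have H2 := H2star p.1 q.1 Tr hTr (hw.toLp _) (hz.toLp _) hwcoe hzcoe
    have hd1 : Integrable (fun x => q.1 x - p.1 x) μ :=
      (memLp_one_iff_integrable.1 hq11).sub (memLp_one_iff_integrable.1 hp11)
    have hTd1 : Integrable (fun x => Tr (q.1 x - p.1 x)) μ := by
      refine MeasureTheory.Integrable.mono' hd1.abs hTrm ?_
      filter_upwards with x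
      rw [Real.norm_eq_abs]
      exact hTr.abs_le _
    have hiA : Integrable (fun x => p.2 x * Tr (q.1 x - p.1 x)) μ := by
      refine hTd1.bdd_mul (c := C3) (Lp.aestronglyMeasurable p.2) ?_
      filter_upwards [hb3] with x hx
      rwa [Real.norm_eq_abs]
    have hiB : Integrable (fun x => q.2 x * Tr (q.1 x - p.1 x)) μ := by
      refine hTd1.bdd_mul (c := C4) (Lp.aestronglyMeasurable q.2) ?_
      filter_upwards [hb4] with x hx
      rwa [Real.norm_eq_abs]
    have hs1 := hpS.2 (hw.toLp _)
    have hs2 := hqS.2 (hz.toLp _)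
    have eA : (∫ x, p.2 x * ((hw.toLp _) x - p.1 x) ∂μ)
        = ∫ x, p.2 x * Tr (q.1 x - p.1 x) ∂μ := by
      refine integral_congr_ae ?_
      filter_upwards [hwcoe] with x hx
      rw [hx]; ring
    have eB : (∫ x, q.2 x * ((hz.toLp _) x - q.1 x) ∂μ)
        = -∫ x, q.2 x * Tr (q.1 x - p.1 x) ∂μ := by
      rw [← MeasureTheory.integral_neg]
      refine integral_congr_ae ?_
      filter_upwards [hzcoe] with x hx
      rw [hx]; ring
    rw [eA] at hs1
    rw [eB] at hs2
    obtain ⟨ep, hep⟩ := WithTop.ne_top_iff_exists.1 hpS.1.ne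
    obtain ⟨eq', heq⟩ := WithTop.ne_top_iff_exists.1 hqS.1.ne
    set A := ∫ x, p.2 x * Tr (q.1 x - p.1 x) ∂μ with hA
    set B := ∫ x, q.2 x * Tr (q.1 x - p.1 x) ∂μ with hB
    have hsum := (add_le_add hs1 hs2).trans H2
    rw [← hep, ← heq] at hsum
    have hco : ((A + ep + (-B + eq') : ℝ) : WithTop ℝ) ≤ ((ep + eq' : ℝ) : WithTop ℝ) := by
      refine le_trans (le_of_eq ?_) hsum
      push_cast
      abel
    have hreal : A + ep + (-B + eq') ≤ ep + eq' := WithTop.coe_le_coe.1 hco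
    have hAB : A - B ≤ 0 := by linarith
    have eg : (∫ x, (p.2 x - q.2 x) * T (p.1 x - q.1 x) ∂μ) = -(A - B) := by
      rw [hA, hB, ← MeasureTheory.integral_sub hiA hiB, ← MeasureTheory.integral_neg]
      refine integral_congr_ae ?_
      filter_upwards with x
      have e2 : T (p.1 x - q.1 x) = -Tr (q.1 x - p.1 x) := by
        rw [hTrdef]
        simp only [neg_neg]
        rw [show -(q.1 x - p.1 x) = p.1 x - q.1 x by ring]
      rw [e2]; ring
    rw [eg]
    linarith
  exact MemJ0.lintegral_le hjmem hfm hgm hfi hgi hR lemA hlam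


end
end

section
/- Let (Σ, 𝔅, μ) be a σ-finite measure space, f ∈ L¹(Σ, μ) ∩ L^∞(Σ, μ), and let u : Σ → ℝ be measurable with ∫_Σ j(u) dμ ≤ ∫_Σ j(f) dμ for every j ∈ J₀. Then ‖u‖_{L^∞} ≤ ‖f‖_{L^∞} and ‖u‖_{L^p} ≤ ‖f‖_{L^p} for every p ∈ [1, ∞); in particular u ∈ L¹ ∩ L^∞ ⊆ L². -/
open MeasureTheory Filter Topology
open scoped ENNReal

/-- The function `x ↦ |x| ^ r` (as a map to `ℝ≥0∞`) belongs to `J₀` for `r ≥ 1`. -/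
lemma memJ0_rpow {r : ℝ} (hr : 1 ≤ r) :
    MemJ0 (fun x : ℝ => ENNReal.ofReal (|x| ^ r)) := by
  have hr0 : (0:ℝ) ≤ r := le_trans zero_le_one hr
  refine ⟨?_, ?_, ?_⟩
  · exact (ENNReal.continuous_ofReal.comp
      (continuous_abs.rpow_const fun x => Or.inr hr0)).lowerSemicontinuous
  · simp [Real.zero_rpow (by linarith : r ≠ 0)]
  · intro a b t ht0 ht1
    have h1 : |t * a + (1 - t) * b| ^ r ≤ (t * |a| + (1 - t) * |b|) ^ r := by
      apply Real.rpow_le_rpow (abs_nonneg _) _ hr0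
      calc |t * a + (1 - t) * b| ≤ |t * a| + |(1 - t) * b| := abs_add_le _ _
        _ = t * |a| + (1 - t) * |b| := by
            rw [abs_mul, abs_mul, abs_of_nonneg ht0, abs_of_nonneg (sub_nonneg.2 ht1)]
    have h2 : (t * |a| + (1 - t) * |b|) ^ r ≤ t * |a| ^ r + (1 - t) * |b| ^ r := by
      have := (convexOn_rpow hr).2 (Set.mem_Ici.2 (abs_nonneg a))
        (Set.mem_Ici.2 (abs_nonneg b)) ht0 (by linarith : (0:ℝ) ≤ 1 - t) (by ring)
      simpa [smul_eq_mul] using this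
    calc ENNReal.ofReal (|t * a + (1 - t) * b| ^ r)
        ≤ ENNReal.ofReal (t * |a| ^ r + (1 - t) * |b| ^ r) :=
          ENNReal.ofReal_le_ofReal (h1.trans h2)
      _ = ENNReal.ofReal t * ENNReal.ofReal (|a| ^ r)
            + ENNReal.ofReal (1 - t) * ENNReal.ofReal (|b| ^ r) := by
          rw [ENNReal.ofReal_add
              (mul_nonneg ht0 (Real.rpow_nonneg (abs_nonneg _) _))
              (mul_nonneg (by linarith) (Real.rpow_nonneg (abs_nonneg _) _)),
            ENNReal.ofReal_mul ht0, ENNReal.ofReal_mul (by linarith : (0:ℝ) ≤ 1 - t)]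

/-- If `f ∈ L¹ ∩ L^∞` and a measurable `u` satisfies
`∫ j(u) dμ ≤ ∫ j(f) dμ` for every `j ∈ J₀`, then `‖u‖_∞ ≤ ‖f‖_∞` and
`‖u‖_p ≤ ‖f‖_p` for every `p ∈ [1, ∞)`; in particular `u ∈ L¹ ∩ L^∞ ⊆ L²`. -/
theorem norms_le_of_J0_le
    {Ω : Type*} [MeasurableSpace Ω] (μ : Measure Ω) [SigmaFinite μ]
    (f u : Ω → ℝ)
    (hf1 : MemLp f 1 μ) (hfinf : MemLp f ⊤ μ)
    (hu : Measurable u)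
    (h : ∀ j : ℝ → ℝ≥0∞, MemJ0 j → ∫⁻ x, j (u x) ∂μ ≤ ∫⁻ x, j (f x) ∂μ) :
    eLpNorm u ⊤ μ ≤ eLpNorm f ⊤ μ ∧
    (∀ p : ℝ≥0∞, 1 ≤ p → p ≠ ⊤ → eLpNorm u p μ ≤ eLpNorm f p μ) ∧
    MemLp u 1 μ ∧ MemLp u ⊤ μ ∧ MemLp u 2 μ := by
  -- Part 1: finite exponents.
  have hfin : ∀ p : ℝ≥0∞, 1 ≤ p → p ≠ ⊤ → eLpNorm u p μ ≤ eLpNorm f p μ := by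
    intro p hp1 hptop
    have hp0 : p ≠ 0 := fun h0 => by simp [h0] at hp1
    have hr : (1:ℝ) ≤ p.toReal := by
      have := ENNReal.toReal_mono hptop hp1
      simpa using this
    have hr0 : (0:ℝ) ≤ p.toReal := le_trans zero_le_one hr
    have key := h _ (memJ0_rpow hr)
    have conv : ∀ g : Ω → ℝ,
        (∫⁻ x, ENNReal.ofReal (|g x| ^ p.toReal) ∂μ)
          = ∫⁻ x, (‖g x‖₊ : ℝ≥0∞) ^ p.toReal ∂μ := by
      intro g
      refine lintegral_congr fun x => ?_
      rw [← Real.norm_eq_abs, ← ENNReal.ofReal_rpow_of_nonneg (norm_nonneg _) hr0,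
        ofReal_norm, enorm_eq_nnnorm]
    rw [eLpNorm_eq_lintegral_rpow_enorm_toReal hp0 hptop,
      eLpNorm_eq_lintegral_rpow_enorm_toReal hp0 hptop]
    simp only [enorm_eq_nnnorm]
    apply ENNReal.rpow_le_rpow _ (by positivity)
    rw [← conv u, ← conv f]
    exact key
  -- Part 2: the `L^∞` bound.
  set M := (eLpNorm f ⊤ μ).toReal with hM
  have hM0 : (0:ℝ) ≤ M := ENNReal.toReal_nonneg
  set S : Set ℝ := {x | M < |x|} with hS
  have hSopen : IsOpen S := isOpen_lt continuous_const continuous_abs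
  set j : ℝ → ℝ≥0∞ := S.indicator fun _ => ⊤ with hjdef
  have hj : MemJ0 j := by
    refine ⟨hSopen.lowerSemicontinuous_indicator zero_le, ?_, ?_⟩
    · simp [hjdef, hS, Set.indicator, not_lt.2 hM0]
    · intro a b t ht0 ht1
      by_cases hmem : t * a + (1 - t) * b ∈ S
      · -- show RHS = ⊤
        have hkey : (0 < t ∧ a ∈ S) ∨ (0 < 1 - t ∧ b ∈ S) := by
          by_contra hc
          push_neg at hc
          obtain ⟨hA, hB⟩ := hc
          have ha' : t * |a| ≤ t * M := by
            rcases eq_or_lt_of_le ht0 with h0 | h0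
            · simp [← h0]
            · have hle : |a| ≤ M := not_lt.1 fun hlt => hA h0 hlt
              exact mul_le_mul_of_nonneg_left hle ht0
          have hb' : (1 - t) * |b| ≤ (1 - t) * M := by
            rcases eq_or_lt_of_le (by linarith : (0:ℝ) ≤ 1 - t) with h0 | h0
            · simp [← h0]
            · have hle : |b| ≤ M := not_lt.1 fun hlt => hB h0 hlt
              exact mul_le_mul_of_nonneg_left hle (by linarith)
          have habs : |t * a + (1 - t) * b| ≤ M := by
            calc |t * a + (1 - t) * b| ≤ |t * a| + |(1 - t) * b| := abs_add_le _ _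
              _ = t * |a| + (1 - t) * |b| := by
                  rw [abs_mul, abs_mul, abs_of_nonneg ht0, abs_of_nonneg (sub_nonneg.2 ht1)]
              _ ≤ t * M + (1 - t) * M := add_le_add ha' hb'
              _ = M := by ring
          exact absurd (Set.mem_setOf.1 hmem) (not_lt.2 habs)
        have hRHS : ENNReal.ofReal t * j a + ENNReal.ofReal (1 - t) * j b = ⊤ := by
          rcases hkey with ⟨ht, ha⟩ | ⟨ht, hb⟩
          · have hja : j a = ⊤ := Set.indicator_of_mem ha _
            rw [hja, ENNReal.mul_top (by simpa using ht)]; simp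
          · have hjb : j b = ⊤ := Set.indicator_of_mem hb _
            rw [hjb, ENNReal.mul_top (by simpa using ht)]; simp
        rw [hRHS]; exact le_top
      · rw [hjdef, Set.indicator_of_notMem hmem]; exact zero_le
  have hfae : ∀ᵐ x ∂μ, |f x| ≤ M := by
    filter_upwards [enorm_ae_le_eLpNormEssSup f μ] with x hx
    have h1 : ENNReal.ofReal |f x| ≤ eLpNorm f ⊤ μ := by
      rw [← Real.norm_eq_abs, ofReal_norm, eLpNorm_exponent_top]
      exact hx
    calc |f x| = (ENNReal.ofReal |f x|).toReal := (ENNReal.toReal_ofReal (abs_nonneg _)).symm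
      _ ≤ M := ENNReal.toReal_mono hfinf.2.ne h1
  have hfj : ∫⁻ x, j (f x) ∂μ = 0 := by
    rw [show (0:ℝ≥0∞) = ∫⁻ _, (0:ℝ≥0∞) ∂μ by simp]
    refine lintegral_congr_ae ?_
    filter_upwards [hfae] with x hx
    exact Set.indicator_of_notMem (by simpa [hS] using not_lt.2 hx) _
  have huj : ∫⁻ x, j (u x) ∂μ = 0 := le_antisymm (hfj ▸ h j hj) zero_le
  have hjmeas : Measurable fun x => j (u x) :=
    (measurable_const.indicator hSopen.measurableSet).comp hu
  have huae : ∀ᵐ x ∂μ, |u x| ≤ M := by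
    have h0 : ∀ᵐ x ∂μ, j (u x) = 0 := (lintegral_eq_zero_iff hjmeas).1 huj
    filter_upwards [h0] with x hx
    by_contra hc
    push_neg at hc
    have hmm : j (u x) = ⊤ := Set.indicator_of_mem (show u x ∈ S from hc) fun _ => (⊤:ℝ≥0∞)
    rw [hmm] at hx
    simp at hx
  have htop : eLpNorm u ⊤ μ ≤ eLpNorm f ⊤ μ := by
    rw [eLpNorm_exponent_top]
    refine (eLpNormEssSup_le_of_ae_bound (C := M) ?_).trans ?_
    · filter_upwards [huae] with x hx; rwa [Real.norm_eq_abs]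
    · exact ENNReal.ofReal_toReal_le
  -- Memberships.
  have hu1 : MemLp u 1 μ :=
    ⟨hu.aestronglyMeasurable, lt_of_le_of_lt (hfin 1 le_rfl ENNReal.one_ne_top) hf1.2⟩
  have huinf : MemLp u ⊤ μ := ⟨hu.aestronglyMeasurable, htop.trans_lt hfinf.2⟩
  have hu2 : MemLp u 2 μ := by
    refine ⟨hu.aestronglyMeasurable, ?_⟩
    have hC : eLpNormEssSup u μ < ⊤ := by
      rw [← eLpNorm_exponent_top]; exact htop.trans_lt hfinf.2
    have h1lt : (∫⁻ x, (‖u x‖₊ : ℝ≥0∞) ∂μ) < ⊤ := by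
      have := hu1.2; rw [eLpNorm_one_eq_lintegral_enorm] at this; exact this
    rw [eLpNorm_eq_lintegral_rpow_enorm_toReal two_ne_zero ENNReal.ofNat_ne_top]
    have key : (∫⁻ x, (‖u x‖₊ : ℝ≥0∞) ^ (2:ℝ≥0∞).toReal ∂μ)
        ≤ eLpNormEssSup u μ * ∫⁻ x, (‖u x‖₊ : ℝ≥0∞) ∂μ := by
      rw [← lintegral_const_mul' _ _ hC.ne]
      refine lintegral_mono_ae ?_
      filter_upwards [enorm_ae_le_eLpNormEssSup u μ] with x hx
      have h2 : ((‖u x‖₊ : ℝ≥0∞)) ^ (2:ℝ≥0∞).toReal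
          = (‖u x‖₊ : ℝ≥0∞) * (‖u x‖₊ : ℝ≥0∞) := by
        rw [show (2:ℝ≥0∞).toReal = ((2:ℕ):ℝ) by simp, ENNReal.rpow_natCast, pow_two]
      rw [h2]
      exact mul_le_mul_left hx _
    have hfin2 : (∫⁻ x, (‖u x‖₊ : ℝ≥0∞) ^ (2:ℝ≥0∞).toReal ∂μ) < ⊤ :=
      lt_of_le_of_lt key (ENNReal.mul_lt_top hC h1lt)
    exact ENNReal.rpow_lt_top_of_nonneg (by positivity) hfin2.ne
  exact ⟨htop, hfin, hu1, huinf, hu2⟩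
end

section
/- Let φ : ℝ → ℝ be continuous and strictly increasing, let b ∈ ℝ, and let (a_n) be a bounded sequence of real numbers such that (a_n − b)(φ(a_n) − φ(b)) → 0 as n → ∞. Then a_n → b. -/
open Filter Topology

/-- Let `φ : ℝ → ℝ` be continuous and strictly increasing, `b ∈ ℝ`, and let
`(a_n)` be a bounded real sequence with `(a_n − b) (φ(a_n) − φ(b)) → 0`.
Then `a_n → b`. -/
theorem tendsto_of_mul_phi_tendsto_zero
    (φ : ℝ → ℝ) (hφc : Continuous φ) (hφm : StrictMono φ)
    (b : ℝ) (a : ℕ → ℝ) (hbdd : ∃ C : ℝ, ∀ n : ℕ, |a n| ≤ C)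
    (h : Tendsto (fun n => (a n - b) * (φ (a n) - φ b)) atTop (𝓝 0)) :
    Tendsto a atTop (𝓝 b) := by
  obtain ⟨C, hC⟩ := hbdd
  rw [Metric.tendsto_atTop]
  intro ε hε
  set f : ℝ → ℝ := fun x => (x - b) * (φ x - φ b) with hf
  have hfc : Continuous f := by
    apply Continuous.mul
    · exact continuous_id.sub continuous_const
    · exact hφc.sub continuous_const
  have hfpos : ∀ x, x ≠ b → 0 < f x := by
    intro x hx
    rcases lt_or_gt_of_ne hx with h1 | h1
    · have h2 := hφm h1
      simp only [hf]
      nlinarith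
    · have h2 := hφm h1
      simp only [hf]
      nlinarith
  set K := Set.Icc (-C) C ∩ {x : ℝ | ε ≤ |x - b|} with hK
  have hKc : IsCompact K := by
    apply isCompact_Icc.inter_right
    exact isClosed_le continuous_const ((continuous_id.sub continuous_const).abs)
  by_cases hKne : K.Nonempty
  · obtain ⟨x0, hx0, hmin⟩ := hKc.exists_isMinOn hKne hfc.continuousOn
    have hx0ne : x0 ≠ b := by
      intro h'
      have := hx0.2
      rw [h'] at this
      simp at this
      linarith
    have hm : 0 < f x0 := hfpos x0 hx0ne
    obtain ⟨N, hN⟩ := (Metric.tendsto_atTop.mp h) (f x0) hm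
    refine ⟨N, fun n hn => ?_⟩
    by_contra hcon
    push_neg at hcon
    have han : a n ∈ K := ⟨⟨neg_le_of_abs_le (hC n), le_of_abs_le (hC n)⟩, by
      simpa [Real.dist_eq] using hcon⟩
    have h1 : f x0 ≤ f (a n) := hmin han
    have h2 := hN n hn
    rw [Real.dist_eq, sub_zero] at h2
    have h3 : f (a n) < f x0 := lt_of_abs_lt h2
    linarith
  · refine ⟨0, fun n _ => ?_⟩
    by_contra hcon
    push_neg at hcon
    exact hKne ⟨a n, ⟨neg_le_of_abs_le (hC n), le_of_abs_le (hC n)⟩, by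
      simpa [Real.dist_eq] using hcon⟩
end

section
/- Let (Σ, 𝔅, μ) be a σ-finite measure space, φ : ℝ → ℝ continuous and strictly increasing, C > 0, and let f and u_n (n ∈ ℕ) be measurable real-valued functions on Σ with |f| ≤ C and |u_n| ≤ C μ-a.e. for all n. If the functions g_n := (f − u_n)(φ∘f − φ∘u_n) converge to 0 in L¹(Σ, μ) as n → ∞, then u_n → f in measure, i.e. for every δ > 0, μ({x ∈ Σ : |u_n(x) − f(x)| > δ}) → 0 as n → ∞. -/
open MeasureTheory Filter Topology
open scoped ENNReal

/-- Let `(Ω, 𝔅, μ)` be a σ-finite measure space, `φ : ℝ → ℝ` continuous and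
strictly increasing, `C > 0`, and let `f` and `u_n` be measurable real
functions with `|f| ≤ C` and `|u_n| ≤ C` μ-a.e. If
`g_n := (f − u_n)(φ∘f − φ∘u_n) → 0` in `L¹`, then `u_n → f` in measure:
for every `δ > 0`, `μ {x : |u_n x − f x| > δ} → 0`. -/
theorem tendstoInMeasure_of_gn_tendsto_zero
    {Ω : Type*} [MeasurableSpace Ω] (μ : Measure Ω) [SigmaFinite μ]
    (φ : ℝ → ℝ) (hφc : Continuous φ) (hφm : StrictMono φ)
    (C : ℝ) (hC : 0 < C)
    (f : Ω → ℝ) (u : ℕ → Ω → ℝ)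
    (hf : Measurable f) (hu : ∀ n : ℕ, Measurable (u n))
    (hfC : ∀ᵐ x ∂μ, |f x| ≤ C) (huC : ∀ n : ℕ, ∀ᵐ x ∂μ, |u n x| ≤ C)
    (hg : Tendsto
      (fun n => eLpNorm (fun x => (f x - u n x) * (φ (f x) - φ (u n x))) 1 μ)
      atTop (𝓝 0)) :
    ∀ δ : ℝ, 0 < δ →
      Tendsto (fun n => μ {x | δ < |u n x - f x|}) atTop (𝓝 0) := by
  intro δ hδ
  -- The compact set of "bad pairs"
  set K : Set (ℝ × ℝ) := (Set.Icc (-C) C ×ˢ Set.Icc (-C) C) ∩ {p | δ ≤ |p.1 - p.2|}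
    with hK
  have hKc : IsCompact K :=
    (isCompact_Icc.prod isCompact_Icc).inter_right
      (isClosed_le continuous_const ((continuous_fst.sub continuous_snd).abs))
  set F : ℝ × ℝ → ℝ := fun p => (p.1 - p.2) * (φ p.1 - φ p.2) with hF
  have hFc : Continuous F :=
    (continuous_fst.sub continuous_snd).mul
      ((hφc.comp continuous_fst).sub (hφc.comp continuous_snd))
  have hFpos : ∀ p ∈ K, 0 < F p := by
    rintro ⟨s, t⟩ ⟨-, hst⟩
    have hne : s ≠ t := by
      intro h
      simp only [Set.mem_setOf_eq, h, sub_self, abs_zero] at hst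
      linarith
    rcases lt_or_gt_of_ne hne with h | h
    · exact mul_pos_of_neg_of_neg (by simpa using h) (by simpa using hφm h)
    · exact mul_pos (by simpa using h) (by simpa using hφm h)
  by_cases hKne : K.Nonempty
  · obtain ⟨p₀, hp₀, hmin'⟩ := hKc.exists_isMinOn hKne hFc.continuousOn
    have hmin : ∀ p ∈ K, F p₀ ≤ F p := hmin'
    set c := F p₀ with hc
    have hcpos : 0 < c := hFpos p₀ hp₀
    have hc0 : ENNReal.ofReal c ≠ 0 := by
      simp [ENNReal.ofReal_eq_zero, not_le, hcpos]
    -- Markov: μ {δ < |u n - f|} ≤ μ {c ≤ |g n|} ≤ (ofReal c)⁻¹ * ‖g n‖₁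
    have key : ∀ n, μ {x | δ < |u n x - f x|} ≤
        (ENNReal.ofReal c)⁻¹ *
          eLpNorm (fun x => (f x - u n x) * (φ (f x) - φ (u n x))) 1 μ := by
      intro n
      have hmeas : AEStronglyMeasurable
          (fun x => (f x - u n x) * (φ (f x) - φ (u n x))) μ :=
        (((hf.sub (hu n)).mul
          ((hφc.measurable.comp hf).sub (hφc.measurable.comp (hu n))))).aestronglyMeasurable
      have hsub : {x | δ < |u n x - f x|} ≤ᵐ[μ]
          {x | ENNReal.ofReal c ≤
            (‖(f x - u n x) * (φ (f x) - φ (u n x))‖₊ : ℝ≥0∞)} := by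
        filter_upwards [hfC, huC n] with x hfx hux hx
        have hxK : (f x, u n x) ∈ K := by
          refine ⟨⟨abs_le.mp hfx, abs_le.mp hux⟩, ?_⟩
          have : δ ≤ |u n x - f x| := le_of_lt hx
          simpa [abs_sub_comm] using this
        have hle : c ≤ (f x - u n x) * (φ (f x) - φ (u n x)) := hmin _ hxK
        have : c ≤ ‖(f x - u n x) * (φ (f x) - φ (u n x))‖ :=
          hle.trans (le_abs_self _)
        show ENNReal.ofReal c ≤ (‖(f x - u n x) * (φ (f x) - φ (u n x))‖₊ : ℝ≥0∞)
        rw [← enorm_eq_nnnorm, ← ofReal_norm]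
        exact ENNReal.ofReal_le_ofReal this
      refine le_trans (measure_mono_ae hsub) ?_
      have := meas_ge_le_mul_pow_eLpNorm_enorm μ one_ne_zero ENNReal.one_ne_top hmeas hc0 (by simp)
      simpa [← enorm_eq_nnnorm] using this
    have hbound : Tendsto (fun n => (ENNReal.ofReal c)⁻¹ *
        eLpNorm (fun x => (f x - u n x) * (φ (f x) - φ (u n x))) 1 μ)
        atTop (𝓝 0) := by
      have := ENNReal.Tendsto.const_mul (a := (ENNReal.ofReal c)⁻¹) hg
        (Or.inr (by simp [hc0]))
      simp at this ⊢
      exact this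
    exact tendsto_of_tendsto_of_tendsto_of_le_of_le tendsto_const_nhds hbound
      (fun n => zero_le) key
  · -- K empty: the bad set is a.e. empty
    have : ∀ n, μ {x | δ < |u n x - f x|} = 0 := by
      intro n
      refine measure_mono_null_ae ?_ (measure_empty)
      filter_upwards [hfC, huC n] with x hfx hux hx
      exact hKne ⟨(f x, u n x), ⟨abs_le.mp hfx, abs_le.mp hux⟩,
        by simpa [abs_sub_comm] using le_of_lt hx⟩
    simpa [this] using tendsto_const_nhds (α := ℝ≥0∞) (f := atTop (α := ℕ))
end

section
/- Let (Σ, 𝔅, μ) be a σ-finite measure space, f ∈ L¹(Σ, μ) ∩ L^∞(Σ, μ), and let (u_n) be a sequence of measurable functions with u_n ≥ 0 μ-a.e. for all n, u_n → f μ-a.e. as n → ∞, and ∫_Σ j(u_n) dμ ≤ ∫_Σ j(f) dμ for every j ∈ J₀ and every n. Then u_n → f in L¹(Σ, μ). -/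
open MeasureTheory Filter Topology
open scoped ENNReal

/-- Let `(Ω, 𝔅, μ)` be a σ-finite measure space, `f ∈ L¹ ∩ L^∞`, and `(u_n)`
a sequence of measurable functions with `u_n ≥ 0` μ-a.e., `u_n → f` μ-a.e.,
and `∫ j(u_n) dμ ≤ ∫ j(f) dμ` for every `j ∈ J₀` and every `n`. Then
`u_n → f` in `L¹`. -/
theorem tendsto_L1_of_J0_le
    {Ω : Type*} [MeasurableSpace Ω] (μ : Measure Ω) [SigmaFinite μ]
    (f : Ω → ℝ) (hf1 : MemLp f 1 μ) (hfinf : MemLp f ⊤ μ)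
    (u : ℕ → Ω → ℝ) (hu : ∀ n : ℕ, Measurable (u n))
    (hpos : ∀ n : ℕ, ∀ᵐ x ∂μ, 0 ≤ u n x)
    (hae : ∀ᵐ x ∂μ, Tendsto (fun n => u n x) atTop (𝓝 (f x)))
    (hj : ∀ n : ℕ, ∀ j : ℝ → ℝ≥0∞, MemJ0 j →
      ∫⁻ x, j (u n x) ∂μ ≤ ∫⁻ x, j (f x) ∂μ) :
    Tendsto (fun n => eLpNorm (fun x => u n x - f x) 1 μ) atTop (𝓝 0) := by
  classical
  have hfm : AEMeasurable f μ := hf1.aestronglyMeasurable.aemeasurable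
  -- `j = ofReal` is in `J₀`
  have hjof : MemJ0 (fun r => ENNReal.ofReal r) := by
    refine ⟨ENNReal.continuous_ofReal.lowerSemicontinuous, by simp, ?_⟩
    intro a b t ht ht1
    calc ENNReal.ofReal (t * a + (1 - t) * b)
        ≤ ENNReal.ofReal (t * a) + ENNReal.ofReal ((1 - t) * b) := ENNReal.ofReal_add_le
      _ = ENNReal.ofReal t * ENNReal.ofReal a + ENNReal.ofReal (1 - t) * ENNReal.ofReal b := by
          rw [ENNReal.ofReal_mul ht, ENNReal.ofReal_mul (by linarith)]
  set I : ℝ≥0∞ := ∫⁻ x, ENNReal.ofReal (f x) ∂μ with hI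
  have hUle : ∀ n, ∫⁻ x, ENNReal.ofReal (u n x) ∂μ ≤ I := fun n => hj n _ hjof
  have hIlt : I < ∞ := by
    have h1 : I ≤ eLpNorm f 1 μ := by
      rw [eLpNorm_one_eq_lintegral_enorm]
      refine lintegral_mono fun x => ?_
      rw [← ofReal_norm_eq_enorm, Real.norm_eq_abs]
      exact ENNReal.ofReal_le_ofReal (le_abs_self _)
    exact lt_of_le_of_lt h1 hf1.2
  -- auxiliary functions
  set D : ℕ → Ω → ℝ≥0∞ := fun n x => ENNReal.ofReal |u n x - f x| with hD
  set G : ℕ → Ω → ℝ≥0∞ := fun n x => ENNReal.ofReal (u n x + f x - |u n x - f x|) with hG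
  have habsm : ∀ n, AEMeasurable (fun x => |u n x - f x|) μ := fun n =>
    continuous_abs.measurable.comp_aemeasurable ((hu n).aemeasurable.sub hfm)
  have hDm : ∀ n, AEMeasurable (D n) μ := fun n => (habsm n).ennreal_ofReal
  have hGm : ∀ n, AEMeasurable (G n) μ :=
    fun n => (((hu n).aemeasurable.add hfm).sub (habsm n)).ennreal_ofReal
  have hpos' : ∀ᵐ x ∂μ, ∀ n, 0 ≤ u n x := ae_all_iff.2 hpos
  have hfpos : ∀ᵐ x ∂μ, 0 ≤ f x := by
    filter_upwards [hpos', hae] with x hp ht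
    exact ge_of_tendsto ht (Eventually.of_forall hp)
  -- pointwise identity: G n x + D n x = ofReal (u n x) + ofReal (f x)
  have hsplit : ∀ n, ∀ᵐ x ∂μ, G n x + D n x
      = ENNReal.ofReal (u n x) + ENNReal.ofReal (f x) := by
    intro n
    filter_upwards [hpos', hfpos] with x hp hf0
    have habs : |u n x - f x| ≤ u n x + f x := by
      rcases abs_cases (u n x - f x) with ⟨h, _⟩ | ⟨h, _⟩ <;> linarith [hp n, hf0]
    have h0 : (0:ℝ) ≤ |u n x - f x| := abs_nonneg _
    show ENNReal.ofReal (u n x + f x - |u n x - f x|) + ENNReal.ofReal |u n x - f x| = _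
    rw [ENNReal.ofReal_sub _ h0, tsub_add_cancel_of_le
      (ENNReal.ofReal_le_ofReal habs), ENNReal.ofReal_add (hp n) hf0]
  have hsplitInt : ∀ n, ∫⁻ x, G n x ∂μ + ∫⁻ x, D n x ∂μ ≤ I + I := by
    intro n
    calc ∫⁻ x, G n x ∂μ + ∫⁻ x, D n x ∂μ
        = ∫⁻ x, (G n x + D n x) ∂μ := (lintegral_add_left' (hGm n) _).symm
      _ = ∫⁻ x, (ENNReal.ofReal (u n x) + ENNReal.ofReal (f x)) ∂μ :=
          lintegral_congr_ae (hsplit n)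
      _ = ∫⁻ x, ENNReal.ofReal (u n x) ∂μ + I :=
          lintegral_add_left' (hu n).aemeasurable.ennreal_ofReal _
      _ ≤ I + I := add_le_add (hUle n) le_rfl
  -- Fatou: liminf ∫ G n ≥ 2I
  have hGtend : ∀ᵐ x ∂μ, Tendsto (fun n => G n x) atTop
      (𝓝 (ENNReal.ofReal (f x) + ENNReal.ofReal (f x))) := by
    filter_upwards [hae, hfpos] with x ht hf0
    have hreal : Tendsto (fun n => u n x + f x - |u n x - f x|) atTop
        (𝓝 (f x + f x - |f x - f x|)) := by
      have h1 : Tendsto (fun n => u n x - f x) atTop (𝓝 (f x - f x)) :=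
        ht.sub tendsto_const_nhds
      exact ((ht.add tendsto_const_nhds).sub h1.abs)
    have h2 : Tendsto (fun n => G n x) atTop
        (𝓝 (ENNReal.ofReal (f x + f x - |f x - f x|))) :=
      (ENNReal.continuous_ofReal.tendsto _).comp hreal
    simpa [ENNReal.ofReal_add hf0 hf0] using h2
  have hFatou : I + I ≤ atTop.liminf (fun n => ∫⁻ x, G n x ∂μ) := by
    have h1 : ∫⁻ x, atTop.liminf (fun n => G n x) ∂μ
        ≤ atTop.liminf (fun n => ∫⁻ x, G n x ∂μ) := lintegral_liminf_le' hGm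
    have h2 : ∫⁻ x, atTop.liminf (fun n => G n x) ∂μ
        = ∫⁻ x, (ENNReal.ofReal (f x) + ENNReal.ofReal (f x)) ∂μ := by
      refine lintegral_congr_ae ?_
      filter_upwards [hGtend] with x ht
      exact ht.liminf_eq
    have h3 : ∫⁻ x, (ENNReal.ofReal (f x) + ENNReal.ofReal (f x)) ∂μ = I + I :=
      lintegral_add_left' hfm.ennreal_ofReal _
    rw [h2, h3] at h1
    exact h1
  -- conclude ∫ D n → 0
  have hDto0 : Tendsto (fun n => ∫⁻ x, D n x ∂μ) atTop (𝓝 0) := by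
    rw [ENNReal.tendsto_atTop_zero]
    intro ε hε
    rcases le_or_gt (I + I) ε with hcase | hcase
    · refine ⟨0, fun n _ => ?_⟩
      have := hsplitInt n
      exact le_trans (le_trans (le_add_self.trans this) hcase) le_rfl
    · have hlt : I + I - ε < atTop.liminf (fun n => ∫⁻ x, G n x ∂μ) :=
        lt_of_lt_of_le (ENNReal.sub_lt_self (by simpa using hIlt.ne)
          (by exact (pos_of_gt hcase).ne') (by exact hε.ne')) hFatou
      have hev : ∀ᶠ n in atTop, I + I - ε < ∫⁻ x, G n x ∂μ :=
        eventually_lt_of_lt_liminf hlt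
      rcases hev.exists_forall_of_atTop with ⟨N, hN⟩
      refine ⟨N, fun n hn => ?_⟩
      have h1 := hsplitInt n
      have h2 := hN n hn
      -- from G + D ≤ 2I and 2I - ε < G, deduce D ≤ ε
      have hGfin : ∫⁻ x, G n x ∂μ ≠ ∞ :=
        ne_top_of_le_ne_top (by simpa using hIlt.ne) (le_add_right le_rfl |>.trans h1)
      have h3 : ∫⁻ x, D n x ∂μ ≤ I + I - ∫⁻ x, G n x ∂μ :=
        ENNReal.le_sub_of_add_le_left hGfin h1
      calc ∫⁻ x, D n x ∂μ ≤ I + I - ∫⁻ x, G n x ∂μ := h3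
        _ ≤ I + I - (I + I - ε) := tsub_le_tsub_left h2.le _
        _ ≤ ε := by
            rw [ENNReal.sub_sub_cancel (by simpa using hIlt.ne) hcase.le]
  -- identify the goal with ∫ D n
  have hgoal : ∀ n, eLpNorm (fun x => u n x - f x) 1 μ = ∫⁻ x, D n x ∂μ := by
    intro n
    rw [eLpNorm_one_eq_lintegral_enorm]
    refine lintegral_congr fun x => ?_
    rw [hD, ← ofReal_norm_eq_enorm, Real.norm_eq_abs]
  simpa only [hgoal] using hDto0
end
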